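/- arXiv:2604.18547 — 6 statements merged into one kernel-verified Lean document; each statement's English description precedes it below -/
import Mathlib

section
/- Let y be a {−1,+1}-valued random variable and v₁, v₂ be [−1,1]-valued random variables that are conditionally independent given y. Define ψⱼ = E[(1+vⱼ)/2 | y=1], ηⱼ = E[(1−vⱼ)/2 | y=−1], πⱼ = (ψⱼ+ηⱼ)/2, and b = P(y=1) − P(y=−1). Then Cov(v₁, v₂) = (1−b²)(2π₁−1)(2π₂−1). -/
open MeasureTheory

/-- Under conditional independence of two `[-1,1]`-valued verifiers given a `{-1,1}`-valued
label `y`, the covariance equals `(1-b^2)(2π₁-1)(2π₂-1)`. -/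
theorem stmt0 {Ω : Type*} [MeasurableSpace Ω] (μ : Measure Ω) [IsProbabilityMeasure μ]
    (y v1 v2 : Ω → ℝ)
    (hy : ∀ ω, y ω = 1 ∨ y ω = -1)
    (hmy : Measurable y) (hm1 : Measurable v1) (hm2 : Measurable v2)
    (hv1 : ∀ ω, v1 ω ∈ Set.Icc (-1 : ℝ) 1) (hv2 : ∀ ω, v2 ω ∈ Set.Icc (-1 : ℝ) 1)
    (hpos1 : μ {ω | y ω = 1} ≠ 0) (hposm : μ {ω | y ω = -1} ≠ 0)
    -- conditional independence of v1 and v2 given y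
    (hCI : ∀ s : ℝ, (s = 1 ∨ s = -1) →
      (∫ ω in {ω | y ω = s}, v1 ω * v2 ω ∂μ) * (μ {ω | y ω = s}).toReal
        = (∫ ω in {ω | y ω = s}, v1 ω ∂μ) * (∫ ω in {ω | y ω = s}, v2 ω ∂μ))
    (b ψ1 ψ2 η1 η2 π1 π2 : ℝ)
    (hb : b = (μ {ω | y ω = 1}).toReal - (μ {ω | y ω = -1}).toReal)
    (hψ1 : ψ1 = (∫ ω in {ω | y ω = 1}, (1 + v1 ω) / 2 ∂μ) / (μ {ω | y ω = 1}).toReal)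
    (hψ2 : ψ2 = (∫ ω in {ω | y ω = 1}, (1 + v2 ω) / 2 ∂μ) / (μ {ω | y ω = 1}).toReal)
    (hη1 : η1 = (∫ ω in {ω | y ω = -1}, (1 - v1 ω) / 2 ∂μ) / (μ {ω | y ω = -1}).toReal)
    (hη2 : η2 = (∫ ω in {ω | y ω = -1}, (1 - v2 ω) / 2 ∂μ) / (μ {ω | y ω = -1}).toReal)
    (hπ1 : π1 = (ψ1 + η1) / 2) (hπ2 : π2 = (ψ2 + η2) / 2) :
    (∫ ω, v1 ω * v2 ω ∂μ) - (∫ ω, v1 ω ∂μ) * (∫ ω, v2 ω ∂μ)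
      = (1 - b ^ 2) * (2 * π1 - 1) * (2 * π2 - 1) := by
  set s : Set Ω := {ω | y ω = 1} with hs
  have hms : MeasurableSet s := hmy (measurableSet_singleton 1)
  have hcompl : {ω | y ω = -1} = sᶜ := by
    ext ω
    simp only [Set.mem_compl_iff, hs, Set.mem_setOf_eq]
    constructor
    · intro h h1; rw [h1] at h; norm_num at h
    · intro h; rcases hy ω with h1 | h1
      · exact absurd h1 h
      · exact h1
  rw [hcompl] at hposm hb hη1 hη2
  set p := (μ s).toReal with hpdef
  set q := (μ sᶜ).toReal with hqdef
  have hpq : p + q = 1 := by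
    rw [hpdef, hqdef, ← ENNReal.toReal_add (measure_ne_top μ s) (measure_ne_top μ sᶜ),
      measure_add_measure_compl hms, measure_univ, ENNReal.toReal_one]
  have hp0 : p ≠ 0 := by
    simp [hpdef, ENNReal.toReal_eq_zero_iff, hpos1, measure_ne_top μ s]
  have hq0 : q ≠ 0 := by
    simp [hqdef, ENNReal.toReal_eq_zero_iff, hposm, measure_ne_top μ sᶜ]
  -- integrability
  have hb1 : ∀ ω, ‖v1 ω‖ ≤ 1 := fun ω => abs_le.mpr ⟨(hv1 ω).1, (hv1 ω).2⟩
  have hb2 : ∀ ω, ‖v2 ω‖ ≤ 1 := fun ω => abs_le.mpr ⟨(hv2 ω).1, (hv2 ω).2⟩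
  have hint1 : Integrable v1 μ :=
    (integrable_const (1 : ℝ)).mono' hm1.aestronglyMeasurable (ae_of_all _ hb1)
  have hint2 : Integrable v2 μ :=
    (integrable_const (1 : ℝ)).mono' hm2.aestronglyMeasurable (ae_of_all _ hb2)
  have hint12 : Integrable (fun ω => v1 ω * v2 ω) μ := by
    refine (integrable_const (1 : ℝ)).mono' (hm1.mul hm2).aestronglyMeasurable
      (ae_of_all _ fun ω => ?_)
    calc ‖v1 ω * v2 ω‖ = ‖v1 ω‖ * ‖v2 ω‖ := norm_mul _ _
      _ ≤ 1 * 1 := mul_le_mul (hb1 ω) (hb2 ω) (norm_nonneg _) zero_le_one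
      _ = 1 := one_mul 1
  set a1 := ∫ ω in s, v1 ω ∂μ with ha1
  set a2 := ∫ ω in s, v2 ω ∂μ with ha2
  set A1 := ∫ ω in sᶜ, v1 ω ∂μ with hA1
  set A2 := ∫ ω in sᶜ, v2 ω ∂μ with hA2
  have hsplit1 : ∫ ω, v1 ω ∂μ = a1 + A1 := (integral_add_compl hms hint1).symm
  have hsplit2 : ∫ ω, v2 ω ∂μ = a2 + A2 := (integral_add_compl hms hint2).symm
  have hsplit12 : ∫ ω, v1 ω * v2 ω ∂μ
      = (∫ ω in s, v1 ω * v2 ω ∂μ) + ∫ ω in sᶜ, v1 ω * v2 ω ∂μ :=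
    (integral_add_compl hms hint12).symm
  have hc1 := hCI 1 (Or.inl rfl)
  have hc2 := hCI (-1) (Or.inr rfl)
  rw [hcompl] at hc2
  have hC1 : ∫ ω in s, v1 ω * v2 ω ∂μ = a1 * a2 / p := (eq_div_iff hp0).mpr hc1
  have hC2 : ∫ ω in sᶜ, v1 ω * v2 ω ∂μ = A1 * A2 / q := (eq_div_iff hq0).mpr hc2
  -- compute the set integrals appearing in ψ, η
  have hconst : ∀ t : Set Ω, ∫ _ω in t, (1 : ℝ) ∂μ = (μ t).toReal := by
    intro t; rw [setIntegral_const, smul_eq_mul, mul_one, measureReal_def]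
  have hI1 : ∫ ω in s, (1 + v1 ω) / 2 ∂μ = (p + a1) / 2 := by
    rw [integral_div, integral_add (integrable_const 1).integrableOn hint1.integrableOn,
      hconst s]
  have hI2 : ∫ ω in s, (1 + v2 ω) / 2 ∂μ = (p + a2) / 2 := by
    rw [integral_div, integral_add (integrable_const 1).integrableOn hint2.integrableOn,
      hconst s]
  have hJ1 : ∫ ω in sᶜ, (1 - v1 ω) / 2 ∂μ = (q - A1) / 2 := by
    rw [integral_div, integral_sub (integrable_const 1).integrableOn hint1.integrableOn,
      hconst sᶜ]
  have hJ2 : ∫ ω in sᶜ, (1 - v2 ω) / 2 ∂μ = (q - A2) / 2 := by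
    rw [integral_div, integral_sub (integrable_const 1).integrableOn hint2.integrableOn,
      hconst sᶜ]
  rw [hI1] at hψ1
  rw [hI2] at hψ2
  rw [hJ1] at hη1
  rw [hJ2] at hη2
  have hq1 : q = 1 - p := by linarith
  subst hπ1 hπ2 hψ1 hψ2 hη1 hη2 hb
  rw [hsplit1, hsplit2, hsplit12, hC1, hC2, hq1]
  have hp1 : p ≠ 1 := fun h => hq0 (by rw [hq1, h]; ring)
  have h1p : (1 : ℝ) - p ≠ 0 := sub_ne_zero.mpr (fun h => hp1 h.symm)
  field_simp
  ring
end

section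
/- Let y be {−1,+1}-valued with b = P(y=1)−P(y=−1), and v₁, v₂, v₃ be [−1,1]-valued random variables, jointly conditionally independent given y. With πⱼ the balanced accuracy of vⱼ, the third central cross-moment satisfies E[∏ⱼ(vⱼ − E vⱼ)] = −2b(1−b²)(2π₁−1)(2π₂−1)(2π₃−1). -/
open MeasureTheory

lemma my_integrable {Ω : Type*} [MeasurableSpace Ω] (μ : Measure Ω) [IsFiniteMeasure μ]
    {g : Ω → ℝ} (C : ℝ) (hg : Measurable g) (hb : ∀ ω, |g ω| ≤ C) : Integrable g μ :=
  (integrable_const C).mono' hg.aestronglyMeasurable (Filter.Eventually.of_forall fun ω => by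
    simpa using hb ω)

lemma my_expand {Ω : Type*} [MeasurableSpace Ω] (μ : Measure Ω) [IsFiniteMeasure μ]
    (v1 v2 v3 : Ω → ℝ) (c1 c2 c3 : ℝ)
    (h1 : Integrable v1 μ) (h2 : Integrable v2 μ) (h3 : Integrable v3 μ)
    (h12 : Integrable (fun ω => v1 ω * v2 ω) μ)
    (h13 : Integrable (fun ω => v1 ω * v3 ω) μ)
    (h23 : Integrable (fun ω => v2 ω * v3 ω) μ)
    (h123 : Integrable (fun ω => v1 ω * v2 ω * v3 ω) μ) :
    ∫ ω, (v1 ω - c1) * (v2 ω - c2) * (v3 ω - c3) ∂μ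
      = (∫ ω, v1 ω * v2 ω * v3 ω ∂μ) - c3 * (∫ ω, v1 ω * v2 ω ∂μ)
        - c2 * (∫ ω, v1 ω * v3 ω ∂μ) - c1 * (∫ ω, v2 ω * v3 ω ∂μ)
        + c2 * c3 * (∫ ω, v1 ω ∂μ) + c1 * c3 * (∫ ω, v2 ω ∂μ)
        + c1 * c2 * (∫ ω, v3 ω ∂μ) - c1 * c2 * c3 * (μ Set.univ).toReal := by
  have key : ∀ ω, (v1 ω - c1) * (v2 ω - c2) * (v3 ω - c3)
      = v1 ω * v2 ω * v3 ω - c3 * (v1 ω * v2 ω) - c2 * (v1 ω * v3 ω) - c1 * (v2 ω * v3 ω)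
        + c2 * c3 * v1 ω + c1 * c3 * v2 ω + c1 * c2 * v3 ω - c1 * c2 * c3 := fun ω => by ring
  simp_rw [key]
  have ha : Integrable (fun ω => v1 ω * v2 ω * v3 ω - c3 * (v1 ω * v2 ω)) μ :=
    h123.sub (h12.const_mul c3)
  have hb2 : Integrable (fun ω => v1 ω * v2 ω * v3 ω - c3 * (v1 ω * v2 ω) - c2 * (v1 ω * v3 ω)) μ :=
    ha.sub (h13.const_mul c2)
  have hc : Integrable (fun ω => v1 ω * v2 ω * v3 ω - c3 * (v1 ω * v2 ω) - c2 * (v1 ω * v3 ω)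
      - c1 * (v2 ω * v3 ω)) μ := hb2.sub (h23.const_mul c1)
  have hd : Integrable (fun ω => v1 ω * v2 ω * v3 ω - c3 * (v1 ω * v2 ω) - c2 * (v1 ω * v3 ω)
      - c1 * (v2 ω * v3 ω) + c2 * c3 * v1 ω) μ := hc.add (h1.const_mul (c2 * c3))
  have he : Integrable (fun ω => v1 ω * v2 ω * v3 ω - c3 * (v1 ω * v2 ω) - c2 * (v1 ω * v3 ω)
      - c1 * (v2 ω * v3 ω) + c2 * c3 * v1 ω + c1 * c3 * v2 ω) μ := hd.add (h2.const_mul (c1 * c3))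
  have hf : Integrable (fun ω => v1 ω * v2 ω * v3 ω - c3 * (v1 ω * v2 ω) - c2 * (v1 ω * v3 ω)
      - c1 * (v2 ω * v3 ω) + c2 * c3 * v1 ω + c1 * c3 * v2 ω + c1 * c2 * v3 ω) μ :=
    he.add (h3.const_mul (c1 * c2))
  rw [integral_sub hf (integrable_const _), integral_add he (h3.const_mul _),
    integral_add hd (h2.const_mul _), integral_add hc (h1.const_mul _),
    integral_sub hb2 (h23.const_mul _), integral_sub ha (h13.const_mul _),
    integral_sub h123 (h12.const_mul _),
    integral_const_mul, integral_const_mul, integral_const_mul, integral_const_mul,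
    integral_const_mul, integral_const_mul, integral_const, smul_eq_mul, measureReal_def]
  ring


set_option maxHeartbeats 4000000 in
/-- For three `[-1,1]`-valued verifiers jointly conditionally independent given a binary label,
the third central cross-moment equals `-2b(1-b²)(2π₁-1)(2π₂-1)(2π₃-1)`. -/
theorem stmt1 {Ω : Type*} [MeasurableSpace Ω] (μ : Measure Ω) [IsProbabilityMeasure μ]
    (y v1 v2 v3 : Ω → ℝ)
    (hy : ∀ ω, y ω = 1 ∨ y ω = -1)
    (hmy : Measurable y) (hm1 : Measurable v1) (hm2 : Measurable v2) (hm3 : Measurable v3)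
    (hv1 : ∀ ω, v1 ω ∈ Set.Icc (-1 : ℝ) 1) (hv2 : ∀ ω, v2 ω ∈ Set.Icc (-1 : ℝ) 1)
    (hv3 : ∀ ω, v3 ω ∈ Set.Icc (-1 : ℝ) 1)
    (hpos1 : μ {ω | y ω = 1} ≠ 0) (hposm : μ {ω | y ω = -1} ≠ 0)
    -- pairwise conditional independence given y
    (hCI12 : ∀ s : ℝ, (s = 1 ∨ s = -1) →
      (∫ ω in {ω | y ω = s}, v1 ω * v2 ω ∂μ) * (μ {ω | y ω = s}).toReal
        = (∫ ω in {ω | y ω = s}, v1 ω ∂μ) * (∫ ω in {ω | y ω = s}, v2 ω ∂μ))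
    (hCI13 : ∀ s : ℝ, (s = 1 ∨ s = -1) →
      (∫ ω in {ω | y ω = s}, v1 ω * v3 ω ∂μ) * (μ {ω | y ω = s}).toReal
        = (∫ ω in {ω | y ω = s}, v1 ω ∂μ) * (∫ ω in {ω | y ω = s}, v3 ω ∂μ))
    (hCI23 : ∀ s : ℝ, (s = 1 ∨ s = -1) →
      (∫ ω in {ω | y ω = s}, v2 ω * v3 ω ∂μ) * (μ {ω | y ω = s}).toReal
        = (∫ ω in {ω | y ω = s}, v2 ω ∂μ) * (∫ ω in {ω | y ω = s}, v3 ω ∂μ))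
    -- triple conditional independence given y
    (hCI123 : ∀ s : ℝ, (s = 1 ∨ s = -1) →
      (∫ ω in {ω | y ω = s}, v1 ω * v2 ω * v3 ω ∂μ) * (μ {ω | y ω = s}).toReal ^ 2
        = (∫ ω in {ω | y ω = s}, v1 ω ∂μ) * (∫ ω in {ω | y ω = s}, v2 ω ∂μ)
          * (∫ ω in {ω | y ω = s}, v3 ω ∂μ))
    (b ψ1 ψ2 ψ3 η1 η2 η3 π1 π2 π3 : ℝ)
    (hb : b = (μ {ω | y ω = 1}).toReal - (μ {ω | y ω = -1}).toReal)
    (hψ1 : ψ1 = (∫ ω in {ω | y ω = 1}, (1 + v1 ω) / 2 ∂μ) / (μ {ω | y ω = 1}).toReal)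
    (hψ2 : ψ2 = (∫ ω in {ω | y ω = 1}, (1 + v2 ω) / 2 ∂μ) / (μ {ω | y ω = 1}).toReal)
    (hψ3 : ψ3 = (∫ ω in {ω | y ω = 1}, (1 + v3 ω) / 2 ∂μ) / (μ {ω | y ω = 1}).toReal)
    (hη1 : η1 = (∫ ω in {ω | y ω = -1}, (1 - v1 ω) / 2 ∂μ) / (μ {ω | y ω = -1}).toReal)
    (hη2 : η2 = (∫ ω in {ω | y ω = -1}, (1 - v2 ω) / 2 ∂μ) / (μ {ω | y ω = -1}).toReal)
    (hη3 : η3 = (∫ ω in {ω | y ω = -1}, (1 - v3 ω) / 2 ∂μ) / (μ {ω | y ω = -1}).toReal)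
    (hπ1 : π1 = (ψ1 + η1) / 2) (hπ2 : π2 = (ψ2 + η2) / 2) (hπ3 : π3 = (ψ3 + η3) / 2) :
    (∫ ω, (v1 ω - ∫ ω', v1 ω' ∂μ) * (v2 ω - ∫ ω', v2 ω' ∂μ) * (v3 ω - ∫ ω', v3 ω' ∂μ) ∂μ)
      = -2 * b * (1 - b ^ 2) * (2 * π1 - 1) * (2 * π2 - 1) * (2 * π3 - 1) := by
  have hSm : MeasurableSet {ω | y ω = 1} := hmy (measurableSet_singleton 1)
  have hcompl : {ω | y ω = -1} = {ω | y ω = 1}ᶜ := by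
    ext ω
    rcases hy ω with h | h <;> simp [h] <;> norm_num
  set p := (μ {ω | y ω = 1}).toReal with hp_def
  set q := (μ {ω | y ω = -1}).toReal with hq_def
  have hpq : p + q = 1 := by
    rw [hp_def, hq_def, hcompl, ← ENNReal.toReal_add (measure_ne_top _ _) (measure_ne_top _ _),
      measure_add_measure_compl hSm, measure_univ, ENNReal.toReal_one]
  have hp : p ≠ 0 := ENNReal.toReal_ne_zero.mpr ⟨hpos1, measure_ne_top _ _⟩
  have hq : q ≠ 0 := ENNReal.toReal_ne_zero.mpr ⟨hposm, measure_ne_top _ _⟩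
  have habs1 : ∀ ω, |v1 ω| ≤ 1 := fun ω => abs_le.mpr ⟨(hv1 ω).1, (hv1 ω).2⟩
  have habs2 : ∀ ω, |v2 ω| ≤ 1 := fun ω => abs_le.mpr ⟨(hv2 ω).1, (hv2 ω).2⟩
  have habs3 : ∀ ω, |v3 ω| ≤ 1 := fun ω => abs_le.mpr ⟨(hv3 ω).1, (hv3 ω).2⟩
  have hmul_le : ∀ (f g : Ω → ℝ), (∀ ω, |f ω| ≤ 1) → (∀ ω, |g ω| ≤ 1) →
      ∀ ω, |f ω * g ω| ≤ 1 := by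
    intro f g hf hg ω
    rw [abs_mul]
    exact mul_le_one₀ (hf ω) (abs_nonneg _) (hg ω)
  have hi1 : Integrable v1 μ := my_integrable μ 1 hm1 habs1
  have hi2 : Integrable v2 μ := my_integrable μ 1 hm2 habs2
  have hi3 : Integrable v3 μ := my_integrable μ 1 hm3 habs3
  have hi12 : Integrable (fun ω => v1 ω * v2 ω) μ :=
    my_integrable μ 1 (hm1.mul hm2) (hmul_le _ _ habs1 habs2)
  have hi13 : Integrable (fun ω => v1 ω * v3 ω) μ :=
    my_integrable μ 1 (hm1.mul hm3) (hmul_le _ _ habs1 habs3)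
  have hi23 : Integrable (fun ω => v2 ω * v3 ω) μ :=
    my_integrable μ 1 (hm2.mul hm3) (hmul_le _ _ habs2 habs3)
  have hi123 : Integrable (fun ω => v1 ω * v2 ω * v3 ω) μ :=
    my_integrable μ 1 ((hm1.mul hm2).mul hm3)
      (hmul_le _ _ (hmul_le _ _ habs1 habs2) habs3)
  have hsplit : ∀ f : Ω → ℝ, Integrable f μ →
      ∫ ω, f ω ∂μ = (∫ ω in {ω | y ω = 1}, f ω ∂μ) + ∫ ω in {ω | y ω = -1}, f ω ∂μ := by
    intro f hf
    rw [hcompl]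
    exact (integral_add_compl hSm hf).symm
  set c1 := ∫ ω', v1 ω' ∂μ with hc1_def
  set c2 := ∫ ω', v2 ω' ∂μ with hc2_def
  set c3 := ∫ ω', v3 ω' ∂μ with hc3_def
  have hfc : Integrable (fun ω => (v1 ω - c1) * (v2 ω - c2) * (v3 ω - c3)) μ := by
    refine my_integrable μ ((1 + |c1|) * (1 + |c2|) * (1 + |c3|))
      (((hm1.sub measurable_const).mul (hm2.sub measurable_const)).mul
        (hm3.sub measurable_const)) (fun ω => ?_)
    have b1 : |v1 ω - c1| ≤ 1 + |c1| := (abs_sub _ _).trans (by linarith [habs1 ω])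
    have b2 : |v2 ω - c2| ≤ 1 + |c2| := (abs_sub _ _).trans (by linarith [habs2 ω])
    have b3 : |v3 ω - c3| ≤ 1 + |c3| := (abs_sub _ _).trans (by linarith [habs3 ω])
    rw [abs_mul, abs_mul]
    have h12 : |v1 ω - c1| * |v2 ω - c2| ≤ (1 + |c1|) * (1 + |c2|) :=
      mul_le_mul b1 b2 (abs_nonneg _) (by positivity)
    exact mul_le_mul h12 b3 (abs_nonneg _) (by positivity)
  rw [hsplit _ hfc,
    my_expand (μ.restrict {ω | y ω = 1}) v1 v2 v3 c1 c2 c3 hi1.restrict hi2.restrict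
      hi3.restrict hi12.restrict hi13.restrict hi23.restrict hi123.restrict,
    my_expand (μ.restrict {ω | y ω = -1}) v1 v2 v3 c1 c2 c3 hi1.restrict hi2.restrict
      hi3.restrict hi12.restrict hi13.restrict hi23.restrict hi123.restrict,
    Measure.restrict_apply_univ, Measure.restrict_apply_univ, ← hp_def, ← hq_def]
  -- abbreviations for the set integrals
  set I1p := ∫ ω in {ω | y ω = 1}, v1 ω ∂μ with hI1p
  set I2p := ∫ ω in {ω | y ω = 1}, v2 ω ∂μ with hI2p
  set I3p := ∫ ω in {ω | y ω = 1}, v3 ω ∂μ with hI3p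
  set I1m := ∫ ω in {ω | y ω = -1}, v1 ω ∂μ with hI1m
  set I2m := ∫ ω in {ω | y ω = -1}, v2 ω ∂μ with hI2m
  set I3m := ∫ ω in {ω | y ω = -1}, v3 ω ∂μ with hI3m
  -- conditional independence consequences
  have hP12p : (∫ ω in {ω | y ω = 1}, v1 ω * v2 ω ∂μ) = I1p * I2p / p := by
    rw [eq_div_iff hp]; exact hCI12 1 (Or.inl rfl)
  have hP13p : (∫ ω in {ω | y ω = 1}, v1 ω * v3 ω ∂μ) = I1p * I3p / p := by
    rw [eq_div_iff hp]; exact hCI13 1 (Or.inl rfl)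
  have hP23p : (∫ ω in {ω | y ω = 1}, v2 ω * v3 ω ∂μ) = I2p * I3p / p := by
    rw [eq_div_iff hp]; exact hCI23 1 (Or.inl rfl)
  have hP12m : (∫ ω in {ω | y ω = -1}, v1 ω * v2 ω ∂μ) = I1m * I2m / q := by
    rw [eq_div_iff hq]; exact hCI12 (-1) (Or.inr rfl)
  have hP13m : (∫ ω in {ω | y ω = -1}, v1 ω * v3 ω ∂μ) = I1m * I3m / q := by
    rw [eq_div_iff hq]; exact hCI13 (-1) (Or.inr rfl)
  have hP23m : (∫ ω in {ω | y ω = -1}, v2 ω * v3 ω ∂μ) = I2m * I3m / q := by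
    rw [eq_div_iff hq]; exact hCI23 (-1) (Or.inr rfl)
  have hTp : (∫ ω in {ω | y ω = 1}, v1 ω * v2 ω * v3 ω ∂μ) = I1p * I2p * I3p / p ^ 2 := by
    rw [eq_div_iff (pow_ne_zero 2 hp)]; exact hCI123 1 (Or.inl rfl)
  have hTm : (∫ ω in {ω | y ω = -1}, v1 ω * v2 ω * v3 ω ∂μ) = I1m * I2m * I3m / q ^ 2 := by
    rw [eq_div_iff (pow_ne_zero 2 hq)]; exact hCI123 (-1) (Or.inr rfl)
  -- ψ and η in terms of the set integrals
  have e1p : (∫ ω in {ω | y ω = 1}, (1 + v1 ω) / 2 ∂μ) = (p + I1p) / 2 := by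
    rw [hI1p, integral_div, integral_add (integrable_const 1) hi1.restrict, integral_const,
      measureReal_def, Measure.restrict_apply_univ, smul_eq_mul, mul_one, hp_def]
  have e2p : (∫ ω in {ω | y ω = 1}, (1 + v2 ω) / 2 ∂μ) = (p + I2p) / 2 := by
    rw [hI2p, integral_div, integral_add (integrable_const 1) hi2.restrict, integral_const,
      measureReal_def, Measure.restrict_apply_univ, smul_eq_mul, mul_one, hp_def]
  have e3p : (∫ ω in {ω | y ω = 1}, (1 + v3 ω) / 2 ∂μ) = (p + I3p) / 2 := by
    rw [hI3p, integral_div, integral_add (integrable_const 1) hi3.restrict, integral_const,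
      measureReal_def, Measure.restrict_apply_univ, smul_eq_mul, mul_one, hp_def]
  have e1m : (∫ ω in {ω | y ω = -1}, (1 - v1 ω) / 2 ∂μ) = (q - I1m) / 2 := by
    rw [hI1m, integral_div, integral_sub (integrable_const 1) hi1.restrict, integral_const,
      measureReal_def, Measure.restrict_apply_univ, smul_eq_mul, mul_one, hq_def]
  have e2m : (∫ ω in {ω | y ω = -1}, (1 - v2 ω) / 2 ∂μ) = (q - I2m) / 2 := by
    rw [hI2m, integral_div, integral_sub (integrable_const 1) hi2.restrict, integral_const,
      measureReal_def, Measure.restrict_apply_univ, smul_eq_mul, mul_one, hq_def]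
  have e3m : (∫ ω in {ω | y ω = -1}, (1 - v3 ω) / 2 ∂μ) = (q - I3m) / 2 := by
    rw [hI3m, integral_div, integral_sub (integrable_const 1) hi3.restrict, integral_const,
      measureReal_def, Measure.restrict_apply_univ, smul_eq_mul, mul_one, hq_def]
  -- total means
  have hc1 : c1 = I1p + I1m := by rw [hc1_def]; exact hsplit v1 hi1
  have hc2 : c2 = I2p + I2m := by rw [hc2_def]; exact hsplit v2 hi2
  have hc3 : c3 = I3p + I3m := by rw [hc3_def]; exact hsplit v3 hi3
  have hq1 : q = 1 - p := by linarith
  have h1p : (1 : ℝ) - p ≠ 0 := by rw [← hq1]; exact hq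
  rw [hTp, hTm, hP12p, hP13p, hP23p, hP12m, hP13m, hP23m, hc1, hc2, hc3, hb, hπ1, hπ2, hπ3,
    hψ1, hψ2, hψ3, hη1, hη2, hη3, e1p, e2p, e3p, e1m, e2m, e3m, hq1]
  field_simp
  ring
end

section
/- If every triplet of distinct verifiers is conditionally independent given the binary label y, and all balanced accuracies satisfy πⱼ ≠ 1/2 and b ∉ {−1,0,1}, then the collection of ratios {T_{j₁,j₂,j₃}/Σ_{j₁,j₂} : 1 ≤ j₁ < j₂ < j₃ ≤ m, j₃ fixed} has exactly one value for each fixed j₃; i.e., the sample variance of these ratios over pairs (j₁,j₂) is zero. -/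
open MeasureTheory

private lemma alg_sig (p Ai Aj Bi Bj X Y : ℝ) (hp : p ≠ 0) (hq : 1 - p ≠ 0)
    (e1 : X * p = Ai * Aj) (e2 : Y * (1 - p) = Bi * Bj) :
    X + Y - (Ai + Bi) * (Aj + Bj)
      = p * (1 - p) * (Ai / p - Bi / (1 - p)) * (Aj / p - Bj / (1 - p)) := by
  have hX : X = Ai * Aj / p := by rw [eq_div_iff hp]; exact e1
  have hY : Y = Bi * Bj / (1 - p) := by rw [eq_div_iff hq]; exact e2
  subst hX hY
  field_simp
  ring

private lemma alg_T (p Ai Aj Ak Bi Bj Bk X3 Y3 Xij Yij Xik Yik Xjk Yjk : ℝ)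
    (hp : p ≠ 0) (hq : 1 - p ≠ 0)
    (e3 : X3 * p ^ 2 = Ai * Aj * Ak) (f3 : Y3 * (1 - p) ^ 2 = Bi * Bj * Bk)
    (eij : Xij * p = Ai * Aj) (fij : Yij * (1 - p) = Bi * Bj)
    (eik : Xik * p = Ai * Ak) (fik : Yik * (1 - p) = Bi * Bk)
    (ejk : Xjk * p = Aj * Ak) (fjk : Yjk * (1 - p) = Bj * Bk) :
    (X3 + Y3) - (Ak + Bk) * (Xij + Yij) - (Aj + Bj) * (Xik + Yik)
        - (Ai + Bi) * (Xjk + Yjk) + 2 * ((Ai + Bi) * (Aj + Bj) * (Ak + Bk))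
      = (p * (1 - p) * (Ai / p - Bi / (1 - p)) * (Aj / p - Bj / (1 - p)))
          * (((1 - p) - p) * (Ak / p - Bk / (1 - p))) := by
  have hp2 : p ^ 2 ≠ 0 := pow_ne_zero _ hp
  have hq2 : (1 - p) ^ 2 ≠ 0 := pow_ne_zero _ hq
  have hX3 : X3 = Ai * Aj * Ak / p ^ 2 := by rw [eq_div_iff hp2]; exact e3
  have hY3 : Y3 = Bi * Bj * Bk / (1 - p) ^ 2 := by rw [eq_div_iff hq2]; exact f3
  have hXij : Xij = Ai * Aj / p := by rw [eq_div_iff hp]; exact eij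
  have hYij : Yij = Bi * Bj / (1 - p) := by rw [eq_div_iff hq]; exact fij
  have hXik : Xik = Ai * Ak / p := by rw [eq_div_iff hp]; exact eik
  have hYik : Yik = Bi * Bk / (1 - p) := by rw [eq_div_iff hq]; exact fik
  have hXjk : Xjk = Aj * Ak / p := by rw [eq_div_iff hp]; exact ejk
  have hYjk : Yjk = Bj * Bk / (1 - p) := by rw [eq_div_iff hq]; exact fjk
  subst hX3 hY3 hXij hYij hXik hYik hXjk hYjk
  field_simp
  ring

/-- Under TCI, all balanced accuracies ≠ 1/2, and b ∉ {-1,0,1}, for each fixed `j₃` the sample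
variance of the ratios `T j₁ j₂ j₃ / Σ j₁ j₂` over pairs `j₁ < j₂ < j₃` is zero. -/
theorem stmt3 {Ω : Type*} [MeasurableSpace Ω] (μ : Measure Ω) [IsProbabilityMeasure μ]
    {m : ℕ} (hm : 3 ≤ m) (y : Ω → ℝ) (v : Fin m → Ω → ℝ)
    (hy : ∀ ω, y ω = 1 ∨ y ω = -1)
    (hmy : Measurable y) (hmv : ∀ j, Measurable (v j))
    (hvbd : ∀ j ω, v j ω ∈ Set.Icc (-1 : ℝ) 1)
    (hpos1 : μ {ω | y ω = 1} ≠ 0) (hposm : μ {ω | y ω = -1} ≠ 0)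
    -- TCI: every triple of distinct verifiers is conditionally independent given y
    (hTCIpair : ∀ j1 j2 : Fin m, j1 ≠ j2 → ∀ s : ℝ, (s = 1 ∨ s = -1) →
      (∫ ω in {ω | y ω = s}, v j1 ω * v j2 ω ∂μ) * (μ {ω | y ω = s}).toReal
        = (∫ ω in {ω | y ω = s}, v j1 ω ∂μ) * (∫ ω in {ω | y ω = s}, v j2 ω ∂μ))
    (hTCItriple : ∀ j1 j2 j3 : Fin m, j1 ≠ j2 → j1 ≠ j3 → j2 ≠ j3 →
      ∀ s : ℝ, (s = 1 ∨ s = -1) →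
      (∫ ω in {ω | y ω = s}, v j1 ω * v j2 ω * v j3 ω ∂μ) * (μ {ω | y ω = s}).toReal ^ 2
        = (∫ ω in {ω | y ω = s}, v j1 ω ∂μ) * (∫ ω in {ω | y ω = s}, v j2 ω ∂μ)
          * (∫ ω in {ω | y ω = s}, v j3 ω ∂μ))
    (b : ℝ) (ψ η π : Fin m → ℝ)
    (Sig : Fin m → Fin m → ℝ) (T : Fin m → Fin m → Fin m → ℝ)
    (hb : b = (μ {ω | y ω = 1}).toReal - (μ {ω | y ω = -1}).toReal)
    (hbne : b ≠ 1 ∧ b ≠ -1 ∧ b ≠ 0)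
    (hψ : ∀ j, ψ j = (∫ ω in {ω | y ω = 1}, (1 + v j ω) / 2 ∂μ) / (μ {ω | y ω = 1}).toReal)
    (hη : ∀ j, η j = (∫ ω in {ω | y ω = -1}, (1 - v j ω) / 2 ∂μ) / (μ {ω | y ω = -1}).toReal)
    (hπ : ∀ j, π j = (ψ j + η j) / 2)
    (hπne : ∀ j, π j ≠ 1 / 2)
    (hSig : ∀ i j, Sig i j
      = (∫ ω, v i ω * v j ω ∂μ) - (∫ ω, v i ω ∂μ) * (∫ ω, v j ω ∂μ))
    (hT : ∀ i j k, T i j k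
      = ∫ ω, (v i ω - ∫ ω', v i ω' ∂μ) * (v j ω - ∫ ω', v j ω' ∂μ)
          * (v k ω - ∫ ω', v k ω' ∂μ) ∂μ) :
    ∀ j3 : Fin m,
      (1 / ((Finset.univ.filter
          (fun p : Fin m × Fin m => p.1 < p.2 ∧ p.2 < j3)).card : ℝ)) *
        ∑ p ∈ Finset.univ.filter (fun p : Fin m × Fin m => p.1 < p.2 ∧ p.2 < j3),
          (T p.1 p.2 j3 / Sig p.1 p.2
            - (∑ q ∈ Finset.univ.filter (fun q : Fin m × Fin m => q.1 < q.2 ∧ q.2 < j3),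
                T q.1 q.2 j3 / Sig q.1 q.2)
              / ((Finset.univ.filter
                  (fun p : Fin m × Fin m => p.1 < p.2 ∧ p.2 < j3)).card : ℝ)) ^ 2
        = 0 := by
  intro j3
  classical
  have hS : MeasurableSet {ω : Ω | y ω = 1} := hmy (measurableSet_singleton 1)
  have hScomp : {ω : Ω | y ω = -1} = {ω : Ω | y ω = 1}ᶜ := by
    ext ω
    rcases hy ω with h | h <;> simp [h] <;> norm_num
  set p := (μ {ω : Ω | y ω = 1}).toReal with hpdef
  clear_value p
  have hpq : p + (μ ({ω : Ω | y ω = 1}ᶜ)).toReal = 1 := by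
    rw [hpdef, ← ENNReal.toReal_add (measure_ne_top _ _) (measure_ne_top _ _),
      measure_add_measure_compl hS, measure_univ, ENNReal.toReal_one]
  have hp : p ≠ 0 := by
    rw [hpdef]; exact ENNReal.toReal_ne_zero.mpr ⟨hpos1, measure_ne_top _ _⟩
  have hq0 : μ ({ω : Ω | y ω = 1}ᶜ) ≠ 0 := by rw [← hScomp]; exact hposm
  have hqR : (μ ({ω : Ω | y ω = 1}ᶜ)).toReal = 1 - p := by linarith
  have hq : (1 : ℝ) - p ≠ 0 := by
    rw [← hqR]; exact ENNReal.toReal_ne_zero.mpr ⟨hq0, measure_ne_top _ _⟩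
  -- integrability
  have hbd1 : ∀ j ω, |v j ω| ≤ 1 := fun j ω => abs_le.mpr ⟨(hvbd j ω).1, (hvbd j ω).2⟩
  have hIntB : ∀ f : Ω → ℝ, Measurable f → (∀ ω, |f ω| ≤ 1) → Integrable f μ := fun f hf hb' =>
    (integrable_const 1).mono' hf.aestronglyMeasurable
      (Filter.Eventually.of_forall fun ω => by simpa using hb' ω)
  have Iv : ∀ j, Integrable (v j) μ := fun j => hIntB _ (hmv j) (hbd1 j)
  have Ivv : ∀ i j, Integrable (fun ω => v i ω * v j ω) μ := fun i j =>
    hIntB _ ((hmv i).mul (hmv j)) fun ω => by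
      rw [abs_mul]
      nlinarith [abs_nonneg (v i ω), abs_nonneg (v j ω), hbd1 i ω, hbd1 j ω]
  have Ivvv : ∀ i j k, Integrable (fun ω => v i ω * v j ω * v k ω) μ := fun i j k =>
    hIntB _ (((hmv i).mul (hmv j)).mul (hmv k)) fun ω => by
      rw [abs_mul, abs_mul]
      have hij : |v i ω| * |v j ω| ≤ 1 := by
        nlinarith [abs_nonneg (v i ω), abs_nonneg (v j ω), hbd1 i ω, hbd1 j ω]
      nlinarith [hij, hbd1 k ω, abs_nonneg (v k ω),
        mul_nonneg (abs_nonneg (v i ω)) (abs_nonneg (v j ω))]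
  -- split integrals over S and Sᶜ
  have hsplit : ∀ f : Ω → ℝ, Integrable f μ →
      ∫ ω, f ω ∂μ = (∫ ω in {ω : Ω | y ω = 1}, f ω ∂μ)
        + ∫ ω in {ω : Ω | y ω = 1}ᶜ, f ω ∂μ :=
    fun f hf => (integral_add_compl hS hf).symm
  -- TCI instantiated
  have pairS : ∀ i j : Fin m, i ≠ j →
      (∫ ω in {ω : Ω | y ω = 1}, v i ω * v j ω ∂μ) * p
        = (∫ ω in {ω : Ω | y ω = 1}, v i ω ∂μ) * (∫ ω in {ω : Ω | y ω = 1}, v j ω ∂μ) := by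
    intro i j h
    have h2 := hTCIpair i j h 1 (Or.inl rfl)
    rwa [← hpdef] at h2
  have pairC : ∀ i j : Fin m, i ≠ j →
      (∫ ω in {ω : Ω | y ω = 1}ᶜ, v i ω * v j ω ∂μ) * (1 - p)
        = (∫ ω in {ω : Ω | y ω = 1}ᶜ, v i ω ∂μ) * (∫ ω in {ω : Ω | y ω = 1}ᶜ, v j ω ∂μ) := by
    intro i j h
    have h2 := hTCIpair i j h (-1) (Or.inr rfl)
    rwa [hScomp, hqR] at h2
  have tripS : ∀ i j k : Fin m, i ≠ j → i ≠ k → j ≠ k →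
      (∫ ω in {ω : Ω | y ω = 1}, v i ω * v j ω * v k ω ∂μ) * p ^ 2
        = (∫ ω in {ω : Ω | y ω = 1}, v i ω ∂μ) * (∫ ω in {ω : Ω | y ω = 1}, v j ω ∂μ)
          * (∫ ω in {ω : Ω | y ω = 1}, v k ω ∂μ) := by
    intro i j k h1 h2 h3
    have h4 := hTCItriple i j k h1 h2 h3 1 (Or.inl rfl)
    rwa [← hpdef] at h4
  have tripC : ∀ i j k : Fin m, i ≠ j → i ≠ k → j ≠ k →
      (∫ ω in {ω : Ω | y ω = 1}ᶜ, v i ω * v j ω * v k ω ∂μ) * (1 - p) ^ 2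
        = (∫ ω in {ω : Ω | y ω = 1}ᶜ, v i ω ∂μ) * (∫ ω in {ω : Ω | y ω = 1}ᶜ, v j ω ∂μ)
          * (∫ ω in {ω : Ω | y ω = 1}ᶜ, v k ω ∂μ) := by
    intro i j k h1 h2 h3
    have h4 := hTCItriple i j k h1 h2 h3 (-1) (Or.inr rfl)
    rwa [hScomp, hqR] at h4
  -- d j ≠ 0
  have hd : ∀ j : Fin m,
      (∫ ω in {ω : Ω | y ω = 1}, v j ω ∂μ) / p
        - (∫ ω in {ω : Ω | y ω = 1}ᶜ, v j ω ∂μ) / (1 - p) ≠ 0 := by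
    intro j hcontr
    have hψ' : ∫ ω in {ω : Ω | y ω = 1}, (1 + v j ω) / 2 ∂μ
        = (p + ∫ ω in {ω : Ω | y ω = 1}, v j ω ∂μ) / 2 := by
      rw [integral_div, integral_add (integrable_const 1) (Iv j).integrableOn,
        setIntegral_const]
      simp [measureReal_def, ← hpdef]
    have hη' : ∫ ω in {ω : Ω | y ω = 1}ᶜ, (1 - v j ω) / 2 ∂μ
        = ((1 - p) - ∫ ω in {ω : Ω | y ω = 1}ᶜ, v j ω ∂μ) / 2 := by
      rw [integral_div, integral_sub (integrable_const 1) (Iv j).integrableOn,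
        setIntegral_const, measureReal_def, hqR]
      simp
    have hAB : (∫ ω in {ω : Ω | y ω = 1}, v j ω ∂μ) * (1 - p)
        = (∫ ω in {ω : Ω | y ω = 1}ᶜ, v j ω ∂μ) * p := by
      have h5 := sub_eq_zero.mp hcontr
      rwa [div_eq_div_iff hp hq] at h5
    apply hπne j
    rw [hπ j, hψ j, hη j, hScomp, hqR, hψ', hη']
    field_simp [hp, hq]
    linear_combination hAB
  -- expansion of the third moment
  have hTexp : ∀ i j k : Fin m, T i j k =
      (∫ ω, v i ω * v j ω * v k ω ∂μ)
        - (∫ ω', v k ω' ∂μ) * (∫ ω, v i ω * v j ω ∂μ)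
        - (∫ ω', v j ω' ∂μ) * (∫ ω, v i ω * v k ω ∂μ)
        - (∫ ω', v i ω' ∂μ) * (∫ ω, v j ω * v k ω ∂μ)
        + 2 * ((∫ ω', v i ω' ∂μ) * (∫ ω', v j ω' ∂μ) * (∫ ω', v k ω' ∂μ)) := by
    intro i j k
    rw [hT i j k]
    have hfun : (fun ω => (v i ω - ∫ ω', v i ω' ∂μ) * (v j ω - ∫ ω', v j ω' ∂μ)
          * (v k ω - ∫ ω', v k ω' ∂μ))
        = fun ω => (((v i ω * v j ω * v k ω
              - (∫ ω', v k ω' ∂μ) * (v i ω * v j ω))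
              - (∫ ω', v j ω' ∂μ) * (v i ω * v k ω))
              - (∫ ω', v i ω' ∂μ) * (v j ω * v k ω))
            + ((∫ ω', v j ω' ∂μ) * (∫ ω', v k ω' ∂μ) * v i ω
              + ((∫ ω', v i ω' ∂μ) * (∫ ω', v k ω' ∂μ) * v j ω
              + ((∫ ω', v i ω' ∂μ) * (∫ ω', v j ω' ∂μ) * v k ω
              + -((∫ ω', v i ω' ∂μ) * (∫ ω', v j ω' ∂μ) * (∫ ω', v k ω' ∂μ))))) :=
      funext fun ω => by ring
    have Ia := Ivvv i j k
    have Ib := (Ivv i j).const_mul (∫ ω', v k ω' ∂μ)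
    have Ic := (Ivv i k).const_mul (∫ ω', v j ω' ∂μ)
    have Id := (Ivv j k).const_mul (∫ ω', v i ω' ∂μ)
    have Ie := (Iv i).const_mul ((∫ ω', v j ω' ∂μ) * (∫ ω', v k ω' ∂μ))
    have If' := (Iv j).const_mul ((∫ ω', v i ω' ∂μ) * (∫ ω', v k ω' ∂μ))
    have Ig := (Iv k).const_mul ((∫ ω', v i ω' ∂μ) * (∫ ω', v j ω' ∂μ))
    have Ih : Integrable (fun _ : Ω =>
        -((∫ ω', v i ω' ∂μ) * (∫ ω', v j ω' ∂μ) * (∫ ω', v k ω' ∂μ))) μ :=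
      integrable_const _
    have Iab : Integrable (fun ω => v i ω * v j ω * v k ω
        - (∫ ω', v k ω' ∂μ) * (v i ω * v j ω)) μ := Ia.sub Ib
    have Iabc : Integrable (fun ω => v i ω * v j ω * v k ω
        - (∫ ω', v k ω' ∂μ) * (v i ω * v j ω)
        - (∫ ω', v j ω' ∂μ) * (v i ω * v k ω)) μ := Iab.sub Ic
    have Iabcd : Integrable (fun ω => v i ω * v j ω * v k ω
        - (∫ ω', v k ω' ∂μ) * (v i ω * v j ω)
        - (∫ ω', v j ω' ∂μ) * (v i ω * v k ω)
        - (∫ ω', v i ω' ∂μ) * (v j ω * v k ω)) μ := Iabc.sub Id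
    have Igh : Integrable (fun ω => (∫ ω', v i ω' ∂μ) * (∫ ω', v j ω' ∂μ) * v k ω
        + -((∫ ω', v i ω' ∂μ) * (∫ ω', v j ω' ∂μ) * (∫ ω', v k ω' ∂μ))) μ := Ig.add Ih
    have Ifgh : Integrable (fun ω => (∫ ω', v i ω' ∂μ) * (∫ ω', v k ω' ∂μ) * v j ω
        + ((∫ ω', v i ω' ∂μ) * (∫ ω', v j ω' ∂μ) * v k ω
        + -((∫ ω', v i ω' ∂μ) * (∫ ω', v j ω' ∂μ) * (∫ ω', v k ω' ∂μ)))) μ := If'.add Igh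
    have Iefgh : Integrable (fun ω => (∫ ω', v j ω' ∂μ) * (∫ ω', v k ω' ∂μ) * v i ω
        + ((∫ ω', v i ω' ∂μ) * (∫ ω', v k ω' ∂μ) * v j ω
        + ((∫ ω', v i ω' ∂μ) * (∫ ω', v j ω' ∂μ) * v k ω
        + -((∫ ω', v i ω' ∂μ) * (∫ ω', v j ω' ∂μ) * (∫ ω', v k ω' ∂μ))))) μ := Ie.add Ifgh
    rw [hfun, integral_add Iabcd Iefgh,
      integral_sub Iabc Id, integral_sub Iab Ic,
      integral_sub Ia Ib, integral_add Ie Ifgh,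
      integral_add If' Igh, integral_add Ig Ih,
      integral_const_mul, integral_const_mul, integral_const_mul,
      integral_const_mul, integral_const_mul, integral_const_mul, integral_const]
    simp only [probReal_univ, measure_univ, ENNReal.toReal_one, smul_eq_mul, one_mul]
    ring
  -- Sig product formula
  have hSigEq : ∀ i j : Fin m, i ≠ j → Sig i j
      = p * (1 - p)
        * ((∫ ω in {ω : Ω | y ω = 1}, v i ω ∂μ) / p
            - (∫ ω in {ω : Ω | y ω = 1}ᶜ, v i ω ∂μ) / (1 - p))
        * ((∫ ω in {ω : Ω | y ω = 1}, v j ω ∂μ) / p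
            - (∫ ω in {ω : Ω | y ω = 1}ᶜ, v j ω ∂μ) / (1 - p)) := by
    intro i j h
    rw [hSig i j, hsplit _ (Ivv i j), hsplit _ (Iv i), hsplit _ (Iv j)]
    exact alg_sig p _ _ _ _ _ _ hp hq (pairS i j h) (pairC i j h)
  -- T product formula
  have hTEq : ∀ i j k : Fin m, i ≠ j → i ≠ k → j ≠ k → T i j k
      = (p * (1 - p)
          * ((∫ ω in {ω : Ω | y ω = 1}, v i ω ∂μ) / p
              - (∫ ω in {ω : Ω | y ω = 1}ᶜ, v i ω ∂μ) / (1 - p))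
          * ((∫ ω in {ω : Ω | y ω = 1}, v j ω ∂μ) / p
              - (∫ ω in {ω : Ω | y ω = 1}ᶜ, v j ω ∂μ) / (1 - p)))
        * (((1 - p) - p)
          * ((∫ ω in {ω : Ω | y ω = 1}, v k ω ∂μ) / p
              - (∫ ω in {ω : Ω | y ω = 1}ᶜ, v k ω ∂μ) / (1 - p))) := by
    intro i j k h1 h2 h3
    rw [hTexp i j k, hsplit _ (Ivvv i j k), hsplit _ (Ivv i j), hsplit _ (Ivv i k),
      hsplit _ (Ivv j k), hsplit _ (Iv i), hsplit _ (Iv j), hsplit _ (Iv k)]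
    exact alg_T p _ _ _ _ _ _ _ _ _ _ _ _ _ _ hp hq
      (tripS i j k h1 h2 h3) (tripC i j k h1 h2 h3)
      (pairS i j h1) (pairC i j h1) (pairS i k h2) (pairC i k h2)
      (pairS j k h3) (pairC j k h3)
  -- the ratio is a constant
  have key : ∀ i j : Fin m, i ≠ j → i ≠ j3 → j ≠ j3 →
      T i j j3 / Sig i j
        = ((1 - p) - p)
          * ((∫ ω in {ω : Ω | y ω = 1}, v j3 ω ∂μ) / p
              - (∫ ω in {ω : Ω | y ω = 1}ᶜ, v j3 ω ∂μ) / (1 - p)) := by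
    intro i j hij hij3 hjj3
    rw [hTEq i j j3 hij hij3 hjj3, hSigEq i j hij]
    exact mul_div_cancel_left₀ _
      (mul_ne_zero (mul_ne_zero (mul_ne_zero hp hq) (hd i)) (hd j))
  -- conclude
  set s := Finset.univ.filter (fun pr : Fin m × Fin m => pr.1 < pr.2 ∧ pr.2 < j3) with hsdef
  set C := ((1 - p) - p)
      * ((∫ ω in {ω : Ω | y ω = 1}, v j3 ω ∂μ) / p
          - (∫ ω in {ω : Ω | y ω = 1}ᶜ, v j3 ω ∂μ) / (1 - p)) with hCdef
  have hval : ∀ pr ∈ s, T pr.1 pr.2 j3 / Sig pr.1 pr.2 = C := by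
    intro pr hpr
    rw [hsdef, Finset.mem_filter] at hpr
    exact key pr.1 pr.2 (ne_of_lt hpr.2.1) (ne_of_lt (hpr.2.1.trans hpr.2.2))
      (ne_of_lt hpr.2.2)
  have hsum : (∑ q ∈ s, T q.1 q.2 j3 / Sig q.1 q.2) = (s.card : ℝ) * C := by
    rw [Finset.sum_congr rfl hval, Finset.sum_const, nsmul_eq_mul]
  rcases Finset.eq_empty_or_nonempty s with he | hne
  · simp [he]
  · have hcard : (s.card : ℝ) ≠ 0 :=
      Nat.cast_ne_zero.mpr (Finset.card_ne_zero_of_mem hne.choose_spec)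
    rw [hsum]
    have hzero : ∀ pr ∈ s,
        (T pr.1 pr.2 j3 / Sig pr.1 pr.2 - (s.card : ℝ) * C / (s.card : ℝ)) ^ 2 = 0 := by
      intro pr hpr
      rw [hval pr hpr, mul_div_cancel_left₀ _ hcard, sub_self]
      norm_num
    rw [Finset.sum_eq_zero hzero, mul_zero]
end

section
/- Let u = √(1−b²)(2π−1) and w = (−2b(1−b²))^{1/3}(2π−1) for b ∈ (−1,1), b ≠ 0, and π ≠ 1/2. Then b is uniquely determined by the pair (u, w³/u): namely, w³/u = −2b√(1−b²), and the map b ↦ −2b√(1−b²) restricted to appropriate sign information together with u recovers b. Formally: if (b₁,π₁) and (b₂,π₂) with bᵢ ∈ (−1,1)\{0}, πᵢ > 1/2 yield the same u and same w³, then b₁ = b₂ and π₁ = π₂. -/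
/-- Injectivity of `(b, π) ↦ (u, w³)` where `u = √(1-b²)(2π-1)` and
`w³ = -2b(1-b²)(2π-1)³`, on `b ∈ (-1,1) \ {0}`, `π ∈ (1/2, 1]`. -/
theorem stmt7 (b₁ b₂ π₁ π₂ : ℝ)
    (hb₁ : b₁ ∈ Set.Ioo (-1 : ℝ) 1) (hb₂ : b₂ ∈ Set.Ioo (-1 : ℝ) 1)
    (hb₁0 : b₁ ≠ 0) (hb₂0 : b₂ ≠ 0)
    (hπ₁ : π₁ ∈ Set.Ioc (1 / 2 : ℝ) 1) (hπ₂ : π₂ ∈ Set.Ioc (1 / 2 : ℝ) 1)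
    (hu : Real.sqrt (1 - b₁ ^ 2) * (2 * π₁ - 1) = Real.sqrt (1 - b₂ ^ 2) * (2 * π₂ - 1))
    (hw : -2 * b₁ * (1 - b₁ ^ 2) * (2 * π₁ - 1) ^ 3
        = -2 * b₂ * (1 - b₂ ^ 2) * (2 * π₂ - 1) ^ 3) :
    b₁ = b₂ ∧ π₁ = π₂ := by
  obtain ⟨hb₁l, hb₁r⟩ := hb₁
  obtain ⟨hb₂l, hb₂r⟩ := hb₂
  have h1 : (0:ℝ) < 1 - b₁ ^ 2 := by nlinarith
  have h2 : (0:ℝ) < 1 - b₂ ^ 2 := by nlinarith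
  have ht₁ : (0:ℝ) < 2 * π₁ - 1 := by linarith [hπ₁.1]
  have ht₂ : (0:ℝ) < 2 * π₂ - 1 := by linarith [hπ₂.1]
  set s₁ := Real.sqrt (1 - b₁ ^ 2) with hs₁def
  set s₂ := Real.sqrt (1 - b₂ ^ 2) with hs₂def
  have hs₁ : (0:ℝ) < s₁ := Real.sqrt_pos.mpr h1
  have hs₂ : (0:ℝ) < s₂ := Real.sqrt_pos.mpr h2
  have hs₁sq : s₁ ^ 2 = 1 - b₁ ^ 2 := Real.sq_sqrt h1.le
  have hs₂sq : s₂ ^ 2 = 1 - b₂ ^ 2 := Real.sq_sqrt h2.le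
  rw [← hs₁sq, ← hs₂sq] at hw
  -- cube hu
  have hu3 : (s₁ * (2 * π₁ - 1)) ^ 3 = (s₂ * (2 * π₂ - 1)) ^ 3 := by rw [hu]
  -- derive b₁ * s₂ = b₂ * s₁
  have e1 : b₁ * s₁ ^ 2 * (2 * π₁ - 1) ^ 3 = b₂ * s₂ ^ 2 * (2 * π₂ - 1) ^ 3 := by
    linarith [hw]
  have key : b₁ * s₂ = b₂ * s₁ := by
    have hne : s₁ ^ 2 * s₂ ^ 2 * (2 * π₁ - 1) ^ 3 * (2 * π₂ - 1) ^ 3 ≠ 0 := by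
      positivity
    have heq : b₁ * s₂ * (s₁ ^ 2 * s₂ ^ 2 * (2 * π₁ - 1) ^ 3 * (2 * π₂ - 1) ^ 3)
        = b₂ * s₁ * (s₁ ^ 2 * s₂ ^ 2 * (2 * π₁ - 1) ^ 3 * (2 * π₂ - 1) ^ 3) := by
      linear_combination (s₂ * (2 * π₂ - 1)) ^ 3 * e1 - b₂ * s₂ ^ 2 * (2 * π₂ - 1) ^ 3 * hu3
    exact mul_right_cancel₀ hne heq
  have keysq : (b₁ * s₂) ^ 2 = (b₂ * s₁) ^ 2 := by rw [key]
  have hsq : b₁ ^ 2 = b₂ ^ 2 := by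
    linear_combination keysq - b₁ ^ 2 * hs₂sq + b₂ ^ 2 * hs₁sq
  have hss : s₁ = s₂ := by rw [hs₁def, hs₂def, hsq]
  have hb : b₁ = b₂ := by
    rw [hss] at key
    exact mul_right_cancel₀ hs₂.ne' key
  refine ⟨hb, ?_⟩
  rw [hss] at hu
  have := mul_left_cancel₀ hs₂.ne' hu
  linarith
end

section
/- Let y ∈ {−1,1} with class imbalance b, and let v₁, v₂ be {−1,1}-valued verifiers conditionally independent given y, with balanced accuracies π₁, π₂. Then Cov(v₁,v₂) ≥ 0 if π₁ > 1/2 and π₂ > 1/2 (and in fact Cov(v₁,v₂) = (1−b²)(2π₁−1)(2π₂−1) > 0 when b ∈ (−1,1)). -/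
open MeasureTheory

lemma myInt_pm {Ω : Type*} [MeasurableSpace Ω] (μ : Measure Ω) [IsProbabilityMeasure μ]
    (f : Ω → ℝ) (hf : Measurable f) (h : ∀ ω, f ω = 1 ∨ f ω = -1) :
    ∫ ω, f ω ∂μ = (μ {ω | f ω = 1}).toReal - (μ {ω | f ω = -1}).toReal := by
  have hs1 : MeasurableSet {ω | f ω = 1} := hf (measurableSet_singleton 1)
  have hs2 : MeasurableSet {ω | f ω = -1} := hf (measurableSet_singleton (-1))
  have hcong : ∫ ω, f ω ∂μ
      = ∫ ω, (Set.indicator {ω | f ω = 1} (fun _ => (1:ℝ)) ω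
          - Set.indicator {ω | f ω = -1} (fun _ => (1:ℝ)) ω) ∂μ := by
    refine integral_congr_ae (Filter.Eventually.of_forall fun ω => ?_)
    rcases h ω with h1 | h1 <;> simp [Set.indicator_apply, h1] <;> norm_num
  rw [hcong, integral_sub ((integrable_const (1:ℝ)).indicator hs1)
      ((integrable_const (1:ℝ)).indicator hs2),
    integral_indicator_const _ hs1, integral_indicator_const _ hs2]
  simp
  rfl

lemma mySplit {Ω : Type*} [MeasurableSpace Ω] (μ : Measure Ω) [IsFiniteMeasure μ]
    (f : Ω → ℝ) (hf : Measurable f) (h : ∀ ω, f ω = 1 ∨ f ω = -1) (T : Set Ω) :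
    (μ T).toReal = (μ (T ∩ {ω | f ω = 1})).toReal + (μ (T ∩ {ω | f ω = -1})).toReal := by
  have hs1 : MeasurableSet {ω | f ω = 1} := hf (measurableSet_singleton 1)
  have hc : {ω | f ω = -1} = {ω | f ω = 1}ᶜ := by
    ext ω; rcases h ω with h1 | h1 <;> simp [h1] <;> norm_num
  have key := measure_inter_add_diff (μ := μ) T hs1
  rw [Set.diff_eq] at key
  rw [hc, ← ENNReal.toReal_add (measure_ne_top _ _) (measure_ne_top _ _), key]

lemma myDivLe {m q : ℝ} (h0 : 0 ≤ m) (h : m ≤ q) : m / q ≤ 1 := by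
  rcases lt_or_eq_of_le (h0.trans h) with hq | hq
  · exact (div_le_one hq).2 h
  · have : m = 0 := le_antisymm (by linarith) h0
    simp [this, ← hq]

lemma myKey (p q ψ1 ψ2 η1 η2 π1 π2 b A1 B1 C1 D1 A2 B2 C2 D2
    t111 t1m1 tm11 tmm1 t11m t1mm tm1m tmmm I1 I2 I12 : ℝ)
    (hpq : p + q = 1) (hp : 0 < p) (hq : 0 < q)
    (hA1 : A1 = ψ1 * p) (hB1 : A1 + B1 = p) (hD1 : D1 = η1 * q) (hC1 : C1 + D1 = q)
    (hA2 : A2 = ψ2 * p) (hB2 : A2 + B2 = p) (hD2 : D2 = η2 * q) (hC2 : C2 + D2 = q)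
    (h111 : t111 * p = A1 * A2) (h1m1 : t1m1 * p = A1 * B2)
    (hm11 : tm11 * p = B1 * A2) (hmm1 : tmm1 * p = B1 * B2)
    (h11m : t11m * q = C1 * C2) (h1mm : t1mm * q = C1 * D2)
    (hm1m : tm1m * q = D1 * C2) (hmmm : tmmm * q = D1 * D2)
    (hI1 : I1 = (A1 + C1) - (B1 + D1)) (hI2 : I2 = (A2 + C2) - (B2 + D2))
    (hI12 : I12 = (t111 + t11m + tmm1 + tmmm) - (t1m1 + tm11 + t1mm + tm1m))
    (hb : b = p - q) (hπ1 : π1 = (ψ1 + η1) / 2) (hπ2 : π2 = (ψ2 + η2) / 2) :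
    I12 - I1 * I2 = (1 - b ^ 2) * (2 * π1 - 1) * (2 * π2 - 1) := by
  have hB1' : B1 = p - ψ1 * p := by linarith
  have hB2' : B2 = p - ψ2 * p := by linarith
  have hC1' : C1 = q - η1 * q := by linarith
  have hC2' : C2 = q - η2 * q := by linarith
  have hq' : q = 1 - p := by linarith
  subst hI12 hI1 hI2 hb hπ1 hπ2 hA1 hA2 hD1 hD2 hB1' hB2' hC1' hC2'
  have ht111 : t111 = ψ1 * p * (ψ2 * p) / p := by rw [eq_div_iff hp.ne']; exact h111
  have ht1m1 : t1m1 = ψ1 * p * (p - ψ2 * p) / p := by rw [eq_div_iff hp.ne']; exact h1m1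
  have htm11 : tm11 = (p - ψ1 * p) * (ψ2 * p) / p := by rw [eq_div_iff hp.ne']; exact hm11
  have htmm1 : tmm1 = (p - ψ1 * p) * (p - ψ2 * p) / p := by rw [eq_div_iff hp.ne']; exact hmm1
  have ht11m : t11m = (q - η1 * q) * (q - η2 * q) / q := by rw [eq_div_iff hq.ne']; exact h11m
  have ht1mm : t1mm = (q - η1 * q) * (η2 * q) / q := by rw [eq_div_iff hq.ne']; exact h1mm
  have htm1m : tm1m = (η1 * q) * (q - η2 * q) / q := by rw [eq_div_iff hq.ne']; exact hm1m
  have htmmm : tmmm = (η1 * q) * (η2 * q) / q := by rw [eq_div_iff hq.ne']; exact hmmm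
  subst ht111 ht1m1 htm11 htmm1 ht11m ht1mm htm1m htmmm hq'
  field_simp
  ring

set_option maxHeartbeats 1000000 in
/-- Better-than-random conditionally independent binary verifiers are nonnegatively correlated;
strictly so, with `Cov(v₁,v₂) = (1-b²)(2π₁-1)(2π₂-1)`, when `b ∈ (-1,1)`. -/
theorem stmt10 {Ω : Type*} [MeasurableSpace Ω] (μ : Measure Ω) [IsProbabilityMeasure μ]
    (y v1 v2 : Ω → ℝ)
    (hy : ∀ ω, y ω = 1 ∨ y ω = -1)
    (hv1 : ∀ ω, v1 ω = 1 ∨ v1 ω = -1) (hv2 : ∀ ω, v2 ω = 1 ∨ v2 ω = -1)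
    (hmy : Measurable y) (hm1 : Measurable v1) (hm2 : Measurable v2)
    (b ψ1 ψ2 η1 η2 π1 π2 : ℝ)
    (hb : b = (μ {ω | y ω = 1}).toReal - (μ {ω | y ω = -1}).toReal)
    (hψ1 : ψ1 = (μ ({ω | v1 ω = 1} ∩ {ω | y ω = 1})).toReal / (μ {ω | y ω = 1}).toReal)
    (hψ2 : ψ2 = (μ ({ω | v2 ω = 1} ∩ {ω | y ω = 1})).toReal / (μ {ω | y ω = 1}).toReal)
    (hη1 : η1 = (μ ({ω | v1 ω = -1} ∩ {ω | y ω = -1})).toReal / (μ {ω | y ω = -1}).toReal)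
    (hη2 : η2 = (μ ({ω | v2 ω = -1} ∩ {ω | y ω = -1})).toReal / (μ {ω | y ω = -1}).toReal)
    (hπ1 : π1 = (ψ1 + η1) / 2) (hπ2 : π2 = (ψ2 + η2) / 2)
    -- conditional independence of v1 and v2 given y
    (hCI : ∀ a1 a2 s : ℝ, (a1 = 1 ∨ a1 = -1) → (a2 = 1 ∨ a2 = -1) → (s = 1 ∨ s = -1) →
      (μ ({ω | v1 ω = a1} ∩ {ω | v2 ω = a2} ∩ {ω | y ω = s})).toReal
          * (μ {ω | y ω = s}).toReal
        = (μ ({ω | v1 ω = a1} ∩ {ω | y ω = s})).toReal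
          * (μ ({ω | v2 ω = a2} ∩ {ω | y ω = s})).toReal)
    (hπ1half : 1 / 2 < π1) (hπ2half : 1 / 2 < π2) :
    0 ≤ (∫ ω, v1 ω * v2 ω ∂μ) - (∫ ω, v1 ω ∂μ) * (∫ ω, v2 ω ∂μ) ∧
    (b ∈ Set.Ioo (-1 : ℝ) 1 →
      ((∫ ω, v1 ω * v2 ω ∂μ) - (∫ ω, v1 ω ∂μ) * (∫ ω, v2 ω ∂μ)
          = (1 - b ^ 2) * (2 * π1 - 1) * (2 * π2 - 1)) ∧
      0 < (∫ ω, v1 ω * v2 ω ∂μ) - (∫ ω, v1 ω ∂μ) * (∫ ω, v2 ω ∂μ)) := by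
  -- abbreviations (purely notational)
  have hpq : (μ {ω | y ω = 1}).toReal + (μ {ω | y ω = -1}).toReal = 1 := by
    have h := mySplit μ y hmy hy Set.univ
    simpa [Set.univ_inter] using h.symm
  have hpnn : (0:ℝ) ≤ (μ {ω | y ω = 1}).toReal := ENNReal.toReal_nonneg
  have hqnn : (0:ℝ) ≤ (μ {ω | y ω = -1}).toReal := ENNReal.toReal_nonneg
  -- generic bound: (μ (S ∩ T)).toReal ≤ (μ T).toReal
  have hmono : ∀ S T : Set Ω, (μ (S ∩ T)).toReal ≤ (μ T).toReal := fun S T =>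
    ENNReal.toReal_mono (measure_ne_top _ _) (measure_mono Set.inter_subset_right)
  have hψ1le : ψ1 ≤ 1 := hψ1 ▸ myDivLe ENNReal.toReal_nonneg (hmono _ _)
  have hψ2le : ψ2 ≤ 1 := hψ2 ▸ myDivLe ENNReal.toReal_nonneg (hmono _ _)
  have hη1le : η1 ≤ 1 := hη1 ▸ myDivLe ENNReal.toReal_nonneg (hmono _ _)
  have hη2le : η2 ≤ 1 := hη2 ▸ myDivLe ENNReal.toReal_nonneg (hmono _ _)
  -- positivity of both class probabilities
  have hp : (0:ℝ) < (μ {ω | y ω = 1}).toReal := by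
    rcases lt_or_eq_of_le hpnn with h | h
    · exact h
    · exfalso
      have hψ0 : ψ1 = 0 := by rw [hψ1, ← h, div_zero]
      rw [hπ1, hψ0] at hπ1half
      linarith
  have hq : (0:ℝ) < (μ {ω | y ω = -1}).toReal := by
    rcases lt_or_eq_of_le hqnn with h | h
    · exact h
    · exfalso
      have hη0 : η1 = 0 := by rw [hη1, ← h, div_zero]
      rw [hπ1, hη0] at hπ1half
      linarith
  -- marginal equations
  have hspl1 : ∀ s : Set Ω, (μ s).toReal
      = (μ (s ∩ {ω | v1 ω = 1})).toReal + (μ (s ∩ {ω | v1 ω = -1})).toReal :=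
    mySplit μ v1 hm1 hv1
  have hspl2 : ∀ s : Set Ω, (μ s).toReal
      = (μ (s ∩ {ω | v2 ω = 1})).toReal + (μ (s ∩ {ω | v2 ω = -1})).toReal :=
    mySplit μ v2 hm2 hv2
  have hsply : ∀ s : Set Ω, (μ s).toReal
      = (μ (s ∩ {ω | y ω = 1})).toReal + (μ (s ∩ {ω | y ω = -1})).toReal :=
    mySplit μ y hmy hy
  have hAB1 : (μ {ω | y ω = 1}).toReal
      = (μ ({ω | v1 ω = 1} ∩ {ω | y ω = 1})).toReal
        + (μ ({ω | v1 ω = -1} ∩ {ω | y ω = 1})).toReal := by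
    have h := hspl1 {ω | y ω = 1}
    rwa [Set.inter_comm {ω | y ω = 1} {ω | v1 ω = 1},
      Set.inter_comm {ω | y ω = 1} {ω | v1 ω = -1}] at h
  have hAB2 : (μ {ω | y ω = 1}).toReal
      = (μ ({ω | v2 ω = 1} ∩ {ω | y ω = 1})).toReal
        + (μ ({ω | v2 ω = -1} ∩ {ω | y ω = 1})).toReal := by
    have h := hspl2 {ω | y ω = 1}
    rwa [Set.inter_comm {ω | y ω = 1} {ω | v2 ω = 1},
      Set.inter_comm {ω | y ω = 1} {ω | v2 ω = -1}] at h
  have hCD1 : (μ {ω | y ω = -1}).toReal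
      = (μ ({ω | v1 ω = 1} ∩ {ω | y ω = -1})).toReal
        + (μ ({ω | v1 ω = -1} ∩ {ω | y ω = -1})).toReal := by
    have h := hspl1 {ω | y ω = -1}
    rwa [Set.inter_comm {ω | y ω = -1} {ω | v1 ω = 1},
      Set.inter_comm {ω | y ω = -1} {ω | v1 ω = -1}] at h
  have hCD2 : (μ {ω | y ω = -1}).toReal
      = (μ ({ω | v2 ω = 1} ∩ {ω | y ω = -1})).toReal
        + (μ ({ω | v2 ω = -1} ∩ {ω | y ω = -1})).toReal := by
    have h := hspl2 {ω | y ω = -1}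
    rwa [Set.inter_comm {ω | y ω = -1} {ω | v2 ω = 1},
      Set.inter_comm {ω | y ω = -1} {ω | v2 ω = -1}] at h
  -- first integrals
  have hI1 : ∫ ω, v1 ω ∂μ
      = ((μ ({ω | v1 ω = 1} ∩ {ω | y ω = 1})).toReal
          + (μ ({ω | v1 ω = 1} ∩ {ω | y ω = -1})).toReal)
        - ((μ ({ω | v1 ω = -1} ∩ {ω | y ω = 1})).toReal
          + (μ ({ω | v1 ω = -1} ∩ {ω | y ω = -1})).toReal) := by
    rw [myInt_pm μ v1 hm1 hv1, hsply {ω | v1 ω = 1}, hsply {ω | v1 ω = -1}]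
  have hI2 : ∫ ω, v2 ω ∂μ
      = ((μ ({ω | v2 ω = 1} ∩ {ω | y ω = 1})).toReal
          + (μ ({ω | v2 ω = 1} ∩ {ω | y ω = -1})).toReal)
        - ((μ ({ω | v2 ω = -1} ∩ {ω | y ω = 1})).toReal
          + (μ ({ω | v2 ω = -1} ∩ {ω | y ω = -1})).toReal) := by
    rw [myInt_pm μ v2 hm2 hv2, hsply {ω | v2 ω = 1}, hsply {ω | v2 ω = -1}]
  -- product integral
  have hvv : ∀ ω, v1 ω * v2 ω = 1 ∨ v1 ω * v2 ω = -1 := fun ω => by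
    rcases hv1 ω with h1 | h1 <;> rcases hv2 ω with h2 | h2 <;> rw [h1, h2] <;> norm_num
  have hset1 : {ω | v1 ω * v2 ω = 1}
      = ({ω | v1 ω = 1} ∩ {ω | v2 ω = 1}) ∪ ({ω | v1 ω = -1} ∩ {ω | v2 ω = -1}) := by
    ext ω
    rcases hv1 ω with h1 | h1 <;> rcases hv2 ω with h2 | h2 <;>
      simp [Set.mem_setOf_eq, h1, h2] <;> norm_num
  have hsetm : {ω | v1 ω * v2 ω = -1}
      = ({ω | v1 ω = 1} ∩ {ω | v2 ω = -1}) ∪ ({ω | v1 ω = -1} ∩ {ω | v2 ω = 1}) := by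
    ext ω
    rcases hv1 ω with h1 | h1 <;> rcases hv2 ω with h2 | h2 <;>
      simp [Set.mem_setOf_eq, h1, h2] <;> norm_num
  have hdisj1 : Disjoint ({ω | v1 ω = 1} ∩ {ω | v2 ω = 1})
      (({ω | v1 ω = -1} ∩ {ω | v2 ω = -1}) : Set Ω) := by
    rw [Set.disjoint_left]
    rintro ω ⟨ha, _⟩ ⟨hb, _⟩
    simp only [Set.mem_setOf_eq] at ha hb
    rw [ha] at hb; norm_num at hb
  have hdisjm : Disjoint ({ω | v1 ω = 1} ∩ {ω | v2 ω = -1})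
      (({ω | v1 ω = -1} ∩ {ω | v2 ω = 1}) : Set Ω) := by
    rw [Set.disjoint_left]
    rintro ω ⟨ha, _⟩ ⟨hb, _⟩
    simp only [Set.mem_setOf_eq] at ha hb
    rw [ha] at hb; norm_num at hb
  have hms : ∀ (f : Ω → ℝ) (_ : Measurable f) (c : ℝ), MeasurableSet {ω | f ω = c} :=
    fun f hf c => hf (measurableSet_singleton c)
  have hmu1 : (μ {ω | v1 ω * v2 ω = 1}).toReal
      = (μ ({ω | v1 ω = 1} ∩ {ω | v2 ω = 1})).toReal
        + (μ ({ω | v1 ω = -1} ∩ {ω | v2 ω = -1})).toReal := by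
    rw [hset1, measure_union hdisj1 ((hms v1 hm1 (-1)).inter (hms v2 hm2 (-1))),
      ENNReal.toReal_add (measure_ne_top _ _) (measure_ne_top _ _)]
  have hmum : (μ {ω | v1 ω * v2 ω = -1}).toReal
      = (μ ({ω | v1 ω = 1} ∩ {ω | v2 ω = -1})).toReal
        + (μ ({ω | v1 ω = -1} ∩ {ω | v2 ω = 1})).toReal := by
    rw [hsetm, measure_union hdisjm ((hms v1 hm1 (-1)).inter (hms v2 hm2 1)),
      ENNReal.toReal_add (measure_ne_top _ _) (measure_ne_top _ _)]
  -- reorder intersections: (A ∩ B) ∩ C with C = {y = s}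
  have hreord : ∀ S T U : Set Ω, (S ∩ T) ∩ U = (S ∩ U) ∩ T := fun S T U =>
    Set.inter_right_comm S T U
  have hI12 : ∫ ω, v1 ω * v2 ω ∂μ
      = (((μ ({ω | v1 ω = 1} ∩ {ω | v2 ω = 1} ∩ {ω | y ω = 1})).toReal
          + (μ ({ω | v1 ω = 1} ∩ {ω | v2 ω = 1} ∩ {ω | y ω = -1})).toReal)
        + ((μ ({ω | v1 ω = -1} ∩ {ω | v2 ω = -1} ∩ {ω | y ω = 1})).toReal
          + (μ ({ω | v1 ω = -1} ∩ {ω | v2 ω = -1} ∩ {ω | y ω = -1})).toReal))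
      - (((μ ({ω | v1 ω = 1} ∩ {ω | v2 ω = -1} ∩ {ω | y ω = 1})).toReal
          + (μ ({ω | v1 ω = 1} ∩ {ω | v2 ω = -1} ∩ {ω | y ω = -1})).toReal)
        + ((μ ({ω | v1 ω = -1} ∩ {ω | v2 ω = 1} ∩ {ω | y ω = 1})).toReal
          + (μ ({ω | v1 ω = -1} ∩ {ω | v2 ω = 1} ∩ {ω | y ω = -1})).toReal)) := by
    rw [myInt_pm μ (fun ω => v1 ω * v2 ω) (hm1.mul hm2) hvv]
    rw [show {ω | (fun ω => v1 ω * v2 ω) ω = 1} = {ω | v1 ω * v2 ω = 1} from rfl,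
      show {ω | (fun ω => v1 ω * v2 ω) ω = -1} = {ω | v1 ω * v2 ω = -1} from rfl,
      hmu1, hmum,
      hsply ({ω | v1 ω = 1} ∩ {ω | v2 ω = 1}),
      hsply ({ω | v1 ω = -1} ∩ {ω | v2 ω = -1}),
      hsply ({ω | v1 ω = 1} ∩ {ω | v2 ω = -1}),
      hsply ({ω | v1 ω = -1} ∩ {ω | v2 ω = 1})]
  -- ψ, η to products
  have hA1eq : (μ ({ω | v1 ω = 1} ∩ {ω | y ω = 1})).toReal
      = ψ1 * (μ {ω | y ω = 1}).toReal := by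
    rw [hψ1, div_mul_cancel₀ _ hp.ne']
  have hA2eq : (μ ({ω | v2 ω = 1} ∩ {ω | y ω = 1})).toReal
      = ψ2 * (μ {ω | y ω = 1}).toReal := by
    rw [hψ2, div_mul_cancel₀ _ hp.ne']
  have hD1eq : (μ ({ω | v1 ω = -1} ∩ {ω | y ω = -1})).toReal
      = η1 * (μ {ω | y ω = -1}).toReal := by
    rw [hη1, div_mul_cancel₀ _ hq.ne']
  have hD2eq : (μ ({ω | v2 ω = -1} ∩ {ω | y ω = -1})).toReal
      = η2 * (μ {ω | y ω = -1}).toReal := by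
    rw [hη2, div_mul_cancel₀ _ hq.ne']
  -- the covariance identity
  have hcov : (∫ ω, v1 ω * v2 ω ∂μ) - (∫ ω, v1 ω ∂μ) * (∫ ω, v2 ω ∂μ)
      = (1 - b ^ 2) * (2 * π1 - 1) * (2 * π2 - 1) := by
    refine myKey (μ {ω | y ω = 1}).toReal (μ {ω | y ω = -1}).toReal ψ1 ψ2 η1 η2 π1 π2 b
      (μ ({ω | v1 ω = 1} ∩ {ω | y ω = 1})).toReal
      (μ ({ω | v1 ω = -1} ∩ {ω | y ω = 1})).toReal
      (μ ({ω | v1 ω = 1} ∩ {ω | y ω = -1})).toReal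
      (μ ({ω | v1 ω = -1} ∩ {ω | y ω = -1})).toReal
      (μ ({ω | v2 ω = 1} ∩ {ω | y ω = 1})).toReal
      (μ ({ω | v2 ω = -1} ∩ {ω | y ω = 1})).toReal
      (μ ({ω | v2 ω = 1} ∩ {ω | y ω = -1})).toReal
      (μ ({ω | v2 ω = -1} ∩ {ω | y ω = -1})).toReal
      (μ ({ω | v1 ω = 1} ∩ {ω | v2 ω = 1} ∩ {ω | y ω = 1})).toReal
      (μ ({ω | v1 ω = 1} ∩ {ω | v2 ω = -1} ∩ {ω | y ω = 1})).toReal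
      (μ ({ω | v1 ω = -1} ∩ {ω | v2 ω = 1} ∩ {ω | y ω = 1})).toReal
      (μ ({ω | v1 ω = -1} ∩ {ω | v2 ω = -1} ∩ {ω | y ω = 1})).toReal
      (μ ({ω | v1 ω = 1} ∩ {ω | v2 ω = 1} ∩ {ω | y ω = -1})).toReal
      (μ ({ω | v1 ω = 1} ∩ {ω | v2 ω = -1} ∩ {ω | y ω = -1})).toReal
      (μ ({ω | v1 ω = -1} ∩ {ω | v2 ω = 1} ∩ {ω | y ω = -1})).toReal
      (μ ({ω | v1 ω = -1} ∩ {ω | v2 ω = -1} ∩ {ω | y ω = -1})).toReal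
      (∫ ω, v1 ω ∂μ) (∫ ω, v2 ω ∂μ) (∫ ω, v1 ω * v2 ω ∂μ)
      hpq hp hq hA1eq hAB1.symm hD1eq hCD1.symm hA2eq hAB2.symm hD2eq hCD2.symm
      (hCI 1 1 1 (Or.inl rfl) (Or.inl rfl) (Or.inl rfl))
      (hCI 1 (-1) 1 (Or.inl rfl) (Or.inr rfl) (Or.inl rfl))
      (hCI (-1) 1 1 (Or.inr rfl) (Or.inl rfl) (Or.inl rfl))
      (hCI (-1) (-1) 1 (Or.inr rfl) (Or.inr rfl) (Or.inl rfl))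
      (hCI 1 1 (-1) (Or.inl rfl) (Or.inl rfl) (Or.inr rfl))
      (hCI 1 (-1) (-1) (Or.inl rfl) (Or.inr rfl) (Or.inr rfl))
      (hCI (-1) 1 (-1) (Or.inr rfl) (Or.inl rfl) (Or.inr rfl))
      (hCI (-1) (-1) (-1) (Or.inr rfl) (Or.inr rfl) (Or.inr rfl))
      (by linarith [hI1]) (by linarith [hI2]) (by linarith [hI12]) hb hπ1 hπ2
  -- positivity
  have hb2 : 1 - b ^ 2 > 0 := by
    rw [hb]; nlinarith [mul_pos hp hq]
  have hpos : 0 < (∫ ω, v1 ω * v2 ω ∂μ) - (∫ ω, v1 ω ∂μ) * (∫ ω, v2 ω ∂μ) := by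
    rw [hcov]
    have h1 : 0 < 2 * π1 - 1 := by linarith
    have h2 : 0 < 2 * π2 - 1 := by linarith
    positivity
  exact ⟨hpos.le, fun _ => ⟨hcov, hpos⟩⟩
end

section
/- Let v₁, v₂, v₃ be {−1,1}-valued random variables conditionally independent given y ∈ {−1,1}, with b = P(y=1)−P(y=−1), sensitivities ψⱼ and specificities ηⱼ, and define μⱼ = E[vⱼ]. Then E[(v₁−μ₁)(v₂−μ₂)(v₃−μ₃)] = −2b(1−b²) ∏ⱼ(2πⱼ−1), where πⱼ=(ψⱼ+ηⱼ)/2. In particular, if b = 0 (balanced classes), all off-diagonal third-order central moments vanish. -/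
open MeasureTheory

set_option maxHeartbeats 2000000

/-- For three conditionally independent binary verifiers,
`E[(v₁-μ₁)(v₂-μ₂)(v₃-μ₃)] = -2b(1-b²)∏ⱼ(2πⱼ-1)`; in particular it vanishes when `b = 0`. -/
theorem stmt13 {Ω : Type*} [MeasurableSpace Ω] (μ : Measure Ω) [IsProbabilityMeasure μ]
    (y : Ω → ℝ) (v : Fin 3 → Ω → ℝ)
    (hy : ∀ ω, y ω = 1 ∨ y ω = -1)
    (hv : ∀ j ω, v j ω = 1 ∨ v j ω = -1)
    (hmy : Measurable y) (hmv : ∀ j, Measurable (v j))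
    (hpos1 : μ {ω | y ω = 1} ≠ 0) (hposm : μ {ω | y ω = -1} ≠ 0)
    (b : ℝ) (ψ η π mu : Fin 3 → ℝ)
    (hb : (μ {ω | y ω = 1}).toReal = (1 + b) / 2)
    (hψ : ∀ j, ψ j
      = (μ ({ω | v j ω = 1} ∩ {ω | y ω = 1})).toReal / (μ {ω | y ω = 1}).toReal)
    (hη : ∀ j, η j
      = (μ ({ω | v j ω = -1} ∩ {ω | y ω = -1})).toReal / (μ {ω | y ω = -1}).toReal)
    (hπ : ∀ j, π j = (ψ j + η j) / 2)
    (hmu : ∀ j, mu j = ∫ ω, v j ω ∂μ)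
    -- joint conditional independence of v₁, v₂, v₃ given y
    (hCI : ∀ (a : Fin 3 → ℝ), (∀ j, a j = 1 ∨ a j = -1) → ∀ s : ℝ, (s = 1 ∨ s = -1) →
      (μ ((⋂ j, {ω | v j ω = a j}) ∩ {ω | y ω = s})).toReal * (μ {ω | y ω = s}).toReal ^ 2
        = ∏ j, (μ ({ω | v j ω = a j} ∩ {ω | y ω = s})).toReal) :
    (∫ ω, (v 0 ω - mu 0) * (v 1 ω - mu 1) * (v 2 ω - mu 2) ∂μ)
        = -2 * b * (1 - b ^ 2) * ∏ j, (2 * π j - 1) ∧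
    (b = 0 → (∫ ω, (v 0 ω - mu 0) * (v 1 ω - mu 1) * (v 2 ω - mu 2) ∂μ) = 0) := by
  -- measurability of the basic sets
  have hms : ∀ (s : ℝ), MeasurableSet {ω | y ω = s} := fun s => hmy (measurableSet_singleton s)
  have hmvs : ∀ j (a : ℝ), MeasurableSet {ω | v j ω = a} :=
    fun j a => hmv j (measurableSet_singleton a)
  -- pointwise indicator representation
  have hind : ∀ (w : Ω → ℝ), (∀ ω, w ω = 1 ∨ w ω = -1) → ∀ (a : ℝ), a = 1 ∨ a = -1 →
      ∀ ω, (1 + a * w ω)/2 = Set.indicator {ω | w ω = a} (fun _ => (1:ℝ)) ω := by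
    intro w hw a ha ω
    rcases hw ω with h | h <;> rcases ha with h' | h' <;>
      simp [Set.indicator_apply, h, h'] <;> norm_num
  -- two-factor indicator
  have hg2 : ∀ j (a s : ℝ), (a = 1 ∨ a = -1) → (s = 1 ∨ s = -1) → ∀ ω,
      (1 + a * v j ω)/2 * ((1 + s * y ω)/2)
        = Set.indicator ({ω | v j ω = a} ∩ {ω | y ω = s}) (fun _ => (1:ℝ)) ω := by
    intro j a s ha hs ω
    rw [hind (v j) (hv j) a ha ω, hind y hy s hs ω]
    by_cases h1 : ω ∈ {ω | v j ω = a} <;> by_cases h2 : ω ∈ {ω | y ω = s} <;>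
      simp [Set.indicator_apply, h1, h2]
  -- four-factor indicator
  have hg4 : ∀ (a0 a1 a2 s : ℝ), (a0 = 1 ∨ a0 = -1) → (a1 = 1 ∨ a1 = -1) →
      (a2 = 1 ∨ a2 = -1) → (s = 1 ∨ s = -1) → ∀ ω,
      (1 + a0 * v 0 ω)/2 * ((1 + a1 * v 1 ω)/2) * ((1 + a2 * v 2 ω)/2) * ((1 + s * y ω)/2)
        = Set.indicator ((({ω | v 0 ω = a0} ∩ {ω | v 1 ω = a1}) ∩ {ω | v 2 ω = a2})
            ∩ {ω | y ω = s}) (fun _ => (1:ℝ)) ω := by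
    intro a0 a1 a2 s h0 h1 h2 hs ω
    rw [hind (v 0) (hv 0) a0 h0 ω, hind (v 1) (hv 1) a1 h1 ω, hind (v 2) (hv 2) a2 h2 ω,
      hind y hy s hs ω]
    by_cases m0 : ω ∈ {ω | v 0 ω = a0} <;> by_cases m1 : ω ∈ {ω | v 1 ω = a1} <;>
      by_cases m2 : ω ∈ {ω | v 2 ω = a2} <;> by_cases m3 : ω ∈ {ω | y ω = s} <;>
      simp [Set.indicator_apply, m0, m1, m2, m3]
  -- integrals of indicators
  have hint2 : ∀ j (a s : ℝ), (a = 1 ∨ a = -1) → (s = 1 ∨ s = -1) →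
      (∫ ω, (1 + a * v j ω)/2 * ((1 + s * y ω)/2) ∂μ)
        = (μ ({ω | v j ω = a} ∩ {ω | y ω = s})).toReal := by
    intro j a s ha hs
    rw [integral_congr_ae (Filter.Eventually.of_forall (hg2 j a s ha hs))]
    exact integral_indicator_one ((hmvs j a).inter (hms s))
  have hintg2 : ∀ j (a s : ℝ), (a = 1 ∨ a = -1) → (s = 1 ∨ s = -1) →
      Integrable (fun ω => (1 + a * v j ω)/2 * ((1 + s * y ω)/2)) μ := by
    intro j a s ha hs
    exact ((integrable_const (1:ℝ)).indicator ((hmvs j a).inter (hms s))).congr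
      (Filter.Eventually.of_forall fun ω => (hg2 j a s ha hs ω).symm)
  have hintg4 : ∀ (a0 a1 a2 s : ℝ), (a0 = 1 ∨ a0 = -1) → (a1 = 1 ∨ a1 = -1) →
      (a2 = 1 ∨ a2 = -1) → (s = 1 ∨ s = -1) →
      Integrable (fun ω =>
        (1 + a0 * v 0 ω)/2 * ((1 + a1 * v 1 ω)/2) * ((1 + a2 * v 2 ω)/2) * ((1 + s * y ω)/2)) μ := by
    intro a0 a1 a2 s h0 h1 h2 hs
    exact ((integrable_const (1:ℝ)).indicator
        ((((hmvs 0 a0).inter (hmvs 1 a1)).inter (hmvs 2 a2)).inter (hms s))).congr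
      (Filter.Eventually.of_forall fun ω => (hg4 a0 a1 a2 s h0 h1 h2 hs ω).symm)
  -- nonvanishing denominators
  have hP1 : (μ {ω | y ω = 1}).toReal ≠ 0 :=
    ENNReal.toReal_ne_zero.mpr ⟨hpos1, measure_ne_top μ _⟩
  have hPm : (μ {ω | y ω = -1}).toReal ≠ 0 :=
    ENNReal.toReal_ne_zero.mpr ⟨hposm, measure_ne_top μ _⟩
  -- the set in hCI in explicit form
  have hseteq : ∀ (a : Fin 3 → ℝ) (s : ℝ),
      (⋂ j, {ω | v j ω = a j}) ∩ {ω | y ω = s}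
        = (({ω | v 0 ω = a 0} ∩ {ω | v 1 ω = a 1}) ∩ {ω | v 2 ω = a 2}) ∩ {ω | y ω = s} := by
    intro a s
    ext ω
    constructor
    · rintro ⟨h1, h2⟩
      have h1' := Set.mem_iInter.1 h1
      exact ⟨⟨⟨h1' 0, h1' 1⟩, h1' 2⟩, h2⟩
    · rintro ⟨⟨⟨m0, m1⟩, m2⟩, h2⟩
      refine ⟨Set.mem_iInter.2 fun j => ?_, h2⟩
      fin_cases j <;> assumption
  -- the key conditional independence consequence
  have hint4 : ∀ (a0 a1 a2 s : ℝ), (a0 = 1 ∨ a0 = -1) → (a1 = 1 ∨ a1 = -1) →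
      (a2 = 1 ∨ a2 = -1) → (s = 1 ∨ s = -1) →
      (∫ ω, (1 + a0 * v 0 ω)/2 * ((1 + a1 * v 1 ω)/2) * ((1 + a2 * v 2 ω)/2)
          * ((1 + s * y ω)/2) ∂μ)
        = (μ ({ω | v 0 ω = a0} ∩ {ω | y ω = s})).toReal
          * (μ ({ω | v 1 ω = a1} ∩ {ω | y ω = s})).toReal
          * (μ ({ω | v 2 ω = a2} ∩ {ω | y ω = s})).toReal
          / (μ {ω | y ω = s}).toReal ^ 2 := by
    intro a0 a1 a2 s h0 h1 h2 hs
    have hCI' := hCI ![a0, a1, a2] (by intro j; fin_cases j <;> simpa) s hs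
    rw [hseteq, Fin.prod_univ_three] at hCI'
    simp only [Matrix.cons_val_zero, Matrix.cons_val_one, Matrix.head_cons,
      Matrix.cons_val_two, Matrix.tail_cons] at hCI'
    have hPs : (μ {ω | y ω = s}).toReal ≠ 0 := by
      rcases hs with h | h <;> subst h
      · exact hP1
      · exact hPm
    rw [integral_congr_ae (Filter.Eventually.of_forall (hg4 a0 a1 a2 s h0 h1 h2 hs))]
    rw [eq_div_iff (pow_ne_zero 2 hPs), ← hCI']
    congr 1
    exact integral_indicator_one
      ((((hmvs 0 a0).inter (hmvs 1 a1)).inter (hmvs 2 a2)).inter (hms s))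
  -- additivity facts
  have hadd : ∀ j (s : ℝ), (μ ({ω | v j ω = 1} ∩ {ω | y ω = s})).toReal
      + (μ ({ω | v j ω = -1} ∩ {ω | y ω = s})).toReal = (μ {ω | y ω = s}).toReal := by
    intro j s
    rw [← ENNReal.toReal_add (measure_ne_top μ _) (measure_ne_top μ _)]
    congr 1
    rw [← measure_union ?_ ((hmvs j (-1)).inter (hms s))]
    · congr 1
      ext ω
      constructor
      · rintro (⟨_, h⟩ | ⟨_, h⟩) <;> exact h
      · intro h
        rcases hv j ω with h' | h'
        · exact Or.inl ⟨h', h⟩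
        · exact Or.inr ⟨h', h⟩
    · refine Set.disjoint_left.2 ?_
      rintro ω ⟨h1, _⟩ ⟨h2, _⟩
      rw [Set.mem_setOf_eq] at h1 h2
      rw [h1] at h2
      norm_num at h2
  have hPadd : (μ {ω | y ω = 1}).toReal + (μ {ω | y ω = -1}).toReal = 1 := by
    rw [← ENNReal.toReal_add (measure_ne_top μ _) (measure_ne_top μ _)]
    have huniv : {ω | y ω = 1} ∪ {ω | y ω = -1} = Set.univ := by
      ext ω; simpa using hy ω
    rw [← measure_union ?_ (hms (-1)), huniv, measure_univ, ENNReal.toReal_one]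
    refine Set.disjoint_left.2 ?_
    rintro ω h1 h2
    rw [Set.mem_setOf_eq] at h1 h2
    rw [h1] at h2
    norm_num at h2
  -- sign function
  have hσ : ∀ k : Fin 2, (![(1:ℝ), -1]) k = 1 ∨ (![(1:ℝ), -1]) k = -1 := by
    intro k; fin_cases k <;> simp
  -- mean of each verifier
  have hmu' : ∀ j, mu j
      = (μ ({ω | v j ω = 1} ∩ {ω | y ω = 1})).toReal
        + (μ ({ω | v j ω = 1} ∩ {ω | y ω = -1})).toReal
        - (μ ({ω | v j ω = -1} ∩ {ω | y ω = 1})).toReal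
        - (μ ({ω | v j ω = -1} ∩ {ω | y ω = -1})).toReal := by
    intro j
    have hpt : ∀ ω, v j ω = ∑ i : Fin 2 × Fin 2,
        (![(1:ℝ), -1]) i.1 * ((1 + (![(1:ℝ), -1]) i.1 * v j ω)/2 * ((1 + (![(1:ℝ), -1]) i.2 * y ω)/2)) := by
      intro ω
      simp only [Fintype.sum_prod_type, Fin.sum_univ_two, Matrix.cons_val_zero,
        Matrix.cons_val_one, Matrix.head_cons]
      ring
    rw [hmu j, integral_congr_ae (Filter.Eventually.of_forall hpt),
      integral_finset_sum _ (fun i _ => ((hintg2 j _ _ (hσ i.1) (hσ i.2)).const_mul _))]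
    have hterm : ∀ i : Fin 2 × Fin 2,
        (∫ ω, (![(1:ℝ), -1]) i.1 * ((1 + (![(1:ℝ), -1]) i.1 * v j ω)/2 * ((1 + (![(1:ℝ), -1]) i.2 * y ω)/2)) ∂μ)
          = (![(1:ℝ), -1]) i.1 * (μ ({ω | v j ω = (![(1:ℝ), -1]) i.1} ∩ {ω | y ω = (![(1:ℝ), -1]) i.2})).toReal := by
      intro i
      rw [integral_const_mul, hint2 j _ _ (hσ i.1) (hσ i.2)]
    simp only [hterm, Fintype.sum_prod_type, Fin.sum_univ_two, Matrix.cons_val_zero,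
      Matrix.cons_val_one, Matrix.head_cons]
    ring
  -- main decomposition of the third central moment
  have main : (∫ ω, (v 0 ω - mu 0) * (v 1 ω - mu 1) * (v 2 ω - mu 2) ∂μ)
      = ∑ i : Fin 2 × Fin 2 × Fin 2 × Fin 2,
          ((![(1:ℝ), -1]) i.1 - mu 0) * ((![(1:ℝ), -1]) i.2.1 - mu 1) * ((![(1:ℝ), -1]) i.2.2.1 - mu 2)
          * ((μ ({ω | v 0 ω = (![(1:ℝ), -1]) i.1} ∩ {ω | y ω = (![(1:ℝ), -1]) i.2.2.2})).toReal
            * (μ ({ω | v 1 ω = (![(1:ℝ), -1]) i.2.1} ∩ {ω | y ω = (![(1:ℝ), -1]) i.2.2.2})).toReal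
            * (μ ({ω | v 2 ω = (![(1:ℝ), -1]) i.2.2.1} ∩ {ω | y ω = (![(1:ℝ), -1]) i.2.2.2})).toReal
            / (μ {ω | y ω = (![(1:ℝ), -1]) i.2.2.2}).toReal ^ 2) := by
    have step1 : (∫ ω, (v 0 ω - mu 0) * (v 1 ω - mu 1) * (v 2 ω - mu 2) ∂μ)
        = ∫ ω, ∑ i : Fin 2 × Fin 2 × Fin 2 × Fin 2,
            ((![(1:ℝ), -1]) i.1 - mu 0) * ((![(1:ℝ), -1]) i.2.1 - mu 1) * ((![(1:ℝ), -1]) i.2.2.1 - mu 2)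
            * ((1 + (![(1:ℝ), -1]) i.1 * v 0 ω)/2 * ((1 + (![(1:ℝ), -1]) i.2.1 * v 1 ω)/2)
              * ((1 + (![(1:ℝ), -1]) i.2.2.1 * v 2 ω)/2) * ((1 + (![(1:ℝ), -1]) i.2.2.2 * y ω)/2)) ∂μ := by
      refine integral_congr_ae (Filter.Eventually.of_forall fun ω => ?_)
      simp only [Fintype.sum_prod_type, Fin.sum_univ_two, Matrix.cons_val_zero,
        Matrix.cons_val_one, Matrix.head_cons]
      ring
    rw [step1, integral_finset_sum _ (fun i _ =>
      ((hintg4 _ _ _ _ (hσ i.1) (hσ i.2.1) (hσ i.2.2.1) (hσ i.2.2.2)).const_mul _))]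
    refine Finset.sum_congr rfl fun i _ => ?_
    rw [integral_const_mul, hint4 _ _ _ _ (hσ i.1) (hσ i.2.1) (hσ i.2.2.1) (hσ i.2.2.2)]
  -- expand the 16-term sum in `main`
  simp only [Fintype.sum_prod_type, Fin.sum_univ_two, Matrix.cons_val_zero,
    Matrix.cons_val_one, Matrix.head_cons] at main
  -- introduce abbreviations
  set p := (μ {ω | y ω = 1}).toReal with hp
  set q := (μ {ω | y ω = -1}).toReal with hq
  set A0 := (μ ({ω | v 0 ω = 1} ∩ {ω | y ω = 1})).toReal with hA0
  set A1 := (μ ({ω | v 1 ω = 1} ∩ {ω | y ω = 1})).toReal with hA1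
  set A2 := (μ ({ω | v 2 ω = 1} ∩ {ω | y ω = 1})).toReal with hA2
  set B0 := (μ ({ω | v 0 ω = -1} ∩ {ω | y ω = 1})).toReal with hB0
  set B1 := (μ ({ω | v 1 ω = -1} ∩ {ω | y ω = 1})).toReal with hB1
  set B2 := (μ ({ω | v 2 ω = -1} ∩ {ω | y ω = 1})).toReal with hB2
  set C0 := (μ ({ω | v 0 ω = 1} ∩ {ω | y ω = -1})).toReal with hC0
  set C1 := (μ ({ω | v 1 ω = 1} ∩ {ω | y ω = -1})).toReal with hC1
  set C2 := (μ ({ω | v 2 ω = 1} ∩ {ω | y ω = -1})).toReal with hC2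
  set D0 := (μ ({ω | v 0 ω = -1} ∩ {ω | y ω = -1})).toReal with hD0
  set D1 := (μ ({ω | v 1 ω = -1} ∩ {ω | y ω = -1})).toReal with hD1
  set D2 := (μ ({ω | v 2 ω = -1} ∩ {ω | y ω = -1})).toReal with hD2
  -- collect scalar facts
  have hqb : q = (1 - b)/2 := by linarith [hPadd, hb]
  have h1b : (1 + b) ≠ 0 := fun h => hP1 (by rw [hb, h]; norm_num)
  have h1b' : (1 - b) ≠ 0 := fun h => hPm (by rw [hqb, h]; norm_num)
  have eA0 : A0 = ψ 0 * ((1 + b)/2) := by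
    have h := hψ 0; rw [← hA0] at h
    rw [h, hb]; field_simp
  have eA1 : A1 = ψ 1 * ((1 + b)/2) := by
    have h := hψ 1; rw [← hA1] at h
    rw [h, hb]; field_simp
  have eA2 : A2 = ψ 2 * ((1 + b)/2) := by
    have h := hψ 2; rw [← hA2] at h
    rw [h, hb]; field_simp
  have eD0 : D0 = η 0 * ((1 - b)/2) := by
    have h := hη 0; rw [← hD0] at h
    rw [h, hqb]; field_simp
  have eD1 : D1 = η 1 * ((1 - b)/2) := by
    have h := hη 1; rw [← hD1] at h
    rw [h, hqb]; field_simp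
  have eD2 : D2 = η 2 * ((1 - b)/2) := by
    have h := hη 2; rw [← hD2] at h
    rw [h, hqb]; field_simp
  have eB0 : B0 = (1 + b)/2 - A0 := by
    have h := hadd 0 1; rw [← hA0, ← hB0] at h; linarith [hb]
  have eB1 : B1 = (1 + b)/2 - A1 := by
    have h := hadd 1 1; rw [← hA1, ← hB1] at h; linarith [hb]
  have eB2 : B2 = (1 + b)/2 - A2 := by
    have h := hadd 2 1; rw [← hA2, ← hB2] at h; linarith [hb]
  have eC0 : C0 = (1 - b)/2 - D0 := by
    have h := hadd 0 (-1); rw [← hC0, ← hD0] at h; linarith [hqb]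
  have eC1 : C1 = (1 - b)/2 - D1 := by
    have h := hadd 1 (-1); rw [← hC1, ← hD1] at h; linarith [hqb]
  have eC2 : C2 = (1 - b)/2 - D2 := by
    have h := hadd 2 (-1); rw [← hC2, ← hD2] at h; linarith [hqb]
  have em0 : mu 0 = A0 + C0 - B0 - D0 := by
    have h := hmu' 0; rw [← hA0, ← hB0, ← hC0, ← hD0] at h; linarith
  have em1 : mu 1 = A1 + C1 - B1 - D1 := by
    have h := hmu' 1; rw [← hA1, ← hB1, ← hC1, ← hD1] at h; linarith
  have em2 : mu 2 = A2 + C2 - B2 - D2 := by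
    have h := hmu' 2; rw [← hA2, ← hB2, ← hC2, ← hD2] at h; linarith
  have hpq : p * q = (1 - b ^ 2)/4 := by rw [hb, hqb]; ring
  have t0 : (1 - mu 0) * A0 - (1 + mu 0) * B0 = 2 * (p * q) * (ψ 0 + η 0 - 1) := by
    rw [em0, eB0, eC0, eA0, eD0, hb, hqb]; ring
  have t1 : (1 - mu 1) * A1 - (1 + mu 1) * B1 = 2 * (p * q) * (ψ 1 + η 1 - 1) := by
    rw [em1, eB1, eC1, eA1, eD1, hb, hqb]; ring
  have t2 : (1 - mu 2) * A2 - (1 + mu 2) * B2 = 2 * (p * q) * (ψ 2 + η 2 - 1) := by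
    rw [em2, eB2, eC2, eA2, eD2, hb, hqb]; ring
  have u0 : (1 - mu 0) * C0 - (1 + mu 0) * D0 = -(2 * (p * q) * (ψ 0 + η 0 - 1)) := by
    rw [em0, eB0, eC0, eA0, eD0, hb, hqb]; ring
  have u1 : (1 - mu 1) * C1 - (1 + mu 1) * D1 = -(2 * (p * q) * (ψ 1 + η 1 - 1)) := by
    rw [em1, eB1, eC1, eA1, eD1, hb, hqb]; ring
  have u2 : (1 - mu 2) * C2 - (1 + mu 2) * D2 = -(2 * (p * q) * (ψ 2 + η 2 - 1)) := by
    rw [em2, eB2, eC2, eA2, eD2, hb, hqb]; ring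
  have KEY : (∫ ω, (v 0 ω - mu 0) * (v 1 ω - mu 1) * (v 2 ω - mu 2) ∂μ)
      = -2 * b * (1 - b ^ 2) * ∏ j, (2 * π j - 1) := by
    rw [main, Fin.prod_univ_three, hπ 0, hπ 1, hπ 2]
    have final : (((1 - mu 0) * A0 - (1 + mu 0) * B0) * ((1 - mu 1) * A1 - (1 + mu 1) * B1)
          * ((1 - mu 2) * A2 - (1 + mu 2) * B2)) / p ^ 2
        + (((1 - mu 0) * C0 - (1 + mu 0) * D0) * ((1 - mu 1) * C1 - (1 + mu 1) * D1)
          * ((1 - mu 2) * C2 - (1 + mu 2) * D2)) / q ^ 2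
        = -2 * b * (1 - b ^ 2) * ((2 * ((ψ 0 + η 0) / 2) - 1) * (2 * ((ψ 1 + η 1) / 2) - 1)
            * (2 * ((ψ 2 + η 2) / 2) - 1)) := by
      rw [t0, t1, t2, u0, u1, u2, hpq, hb, hqb]
      field_simp
      ring
    refine Eq.trans ?_ final
    ring
  exact ⟨KEY, fun h0 => by rw [KEY, h0]; ring⟩
end
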